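/- arXiv:2407.06843 — 5 statements merged into one kernel-verified Lean document; each statement's English description precedes it below -/
import Mathlib

section
/- If f is analytic on the open unit disc and 0 ≤ r ≤ ρ < 1, then (1/2π)∫₀^{2π}|f(re^{iθ})|dθ ≤ (1/2π)∫₀^{2π}|f(ρe^{iθ})|dθ; that is, the radial L¹ means r ↦ ‖f_r‖₁ are nondecreasing. -/
open MeasureTheory Real Complex Metric

namespace Complex

noncomputable abbrev abs : AbsoluteValue ℂ ℝ := NormedField.toAbsoluteValue ℂ

theorem norm_eq_abs (z : ℂ) : ‖z‖ = Complex.abs z := rfl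

theorem normSq_eq_abs (z : ℂ) : normSq z = Complex.abs z ^ 2 := normSq_eq_norm_sq z

theorem abs_conj (z : ℂ) : Complex.abs ((starRingEnd ℂ) z) = Complex.abs z := norm_conj z

theorem abs_ofReal (r : ℝ) : Complex.abs (r : ℂ) = |r| := norm_real r

theorem abs_exp (z : ℂ) : Complex.abs (Complex.exp z) = Real.exp z.re := norm_exp z

theorem continuous_abs : Continuous Complex.abs := continuous_norm

end Complex

theorem abs_circleMap_zero (R θ : ℝ) : Complex.abs (circleMap 0 R θ) = |R| :=
  norm_circleMap_zero R θ

lemma poisson_kernel_eq {ρ : ℝ} (hρ : 0 < ρ) {a z : ℂ}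
    (ha : Complex.abs a < ρ) (hz : Complex.abs z = ρ) :
    z * ((z - a)⁻¹ + (starRingEnd ℂ) a * ((ρ : ℂ)^2 - (starRingEnd ℂ) a * z)⁻¹)
      = (((ρ^2 - (Complex.abs a)^2) / (Complex.abs (z - a))^2 : ℝ) : ℂ) := by
  have hz0 : z ≠ 0 := by
    intro h; rw [h, map_zero] at hz; exact (hρ.trans_le hz.ge).false
  have hza : z - a ≠ 0 := sub_ne_zero.mpr (by rintro rfl; exact ha.ne hz)
  have hzc : (starRingEnd ℂ) (z - a) ≠ 0 := by
    rw [Ne, map_eq_zero]; exact hza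
  have hzz : (starRingEnd ℂ) z * z = (ρ : ℂ)^2 := by
    rw [mul_comm, Complex.mul_conj, Complex.normSq_eq_abs, hz]; push_cast; ring
  have key : (ρ : ℂ)^2 - (starRingEnd ℂ) a * z = (starRingEnd ℂ) (z - a) * z := by
    rw [map_sub, sub_mul, hzz]
  have habs : ((Complex.abs (z - a) : ℂ))^2 = (z - a) * (starRingEnd ℂ) (z - a) := by
    rw [← Complex.ofReal_pow, ← Complex.normSq_eq_abs, Complex.mul_conj]
  have haa : ((Complex.abs a : ℂ))^2 = a * (starRingEnd ℂ) a := by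
    rw [← Complex.ofReal_pow, ← Complex.normSq_eq_abs, Complex.mul_conj]
  rw [key, mul_inv]
  have step : ∀ u w : ℂ, u ≠ 0 → w ≠ 0 →
      z * (u⁻¹ + (starRingEnd ℂ) a * (w⁻¹ * z⁻¹))
        = (z * w + (starRingEnd ℂ) a * u) / (u * w) := by
    intro u w hu hw; field_simp
  rw [step _ _ hza hzc]
  have num : z * (starRingEnd ℂ) (z - a) + (starRingEnd ℂ) a * (z - a)
      = (ρ : ℂ)^2 - a * (starRingEnd ℂ) a := by
    rw [map_sub]; linear_combination hzz
  rw [num]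
  push_cast
  rw [habs, haa]

lemma poisson_rep {ρ : ℝ} (hρ : 0 < ρ) {f : ℂ → ℂ}
    (hc : ContinuousOn f (closedBall 0 ρ))
    (hd : ∀ z ∈ ball (0:ℂ) ρ, DifferentiableAt ℂ f z)
    {a : ℂ} (ha : Complex.abs a < ρ) :
    f a = (2 * π : ℂ)⁻¹ * ∫ t in (0:ℝ)..(2*π),
      (((ρ^2 - (Complex.abs a)^2) / (Complex.abs (circleMap 0 ρ t - a))^2 : ℝ) : ℂ)
        * f (circleMap 0 ρ t) := by
  have ha' : a ∈ ball (0:ℂ) ρ := by simpa [Complex.norm_eq_abs] using ha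
  have hden : ∀ z ∈ closedBall (0:ℂ) ρ, (ρ:ℂ)^2 - (starRingEnd ℂ) a * z ≠ 0 := by
    intro z hz h
    rw [sub_eq_zero] at h
    have hz' : Complex.abs z ≤ ρ := by
      simpa [Complex.norm_eq_abs] using mem_closedBall_zero_iff.mp hz
    have h1 : Complex.abs ((starRingEnd ℂ) a * z) < ρ^2 := by
      rw [map_mul, Complex.abs_conj]
      nlinarith [Complex.abs.nonneg a, Complex.abs.nonneg z]
    have h2 : Complex.abs ((ρ:ℂ)^2) = ρ^2 := by
      rw [map_pow, Complex.abs_ofReal, abs_of_pos hρ]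
    rw [← h, h2] at h1
    exact lt_irrefl _ h1
  have h1 : (∮ z in C(0, ρ), (z - a)⁻¹ • f z) = (2 * π * I : ℂ) • f a :=
    Complex.circleIntegral_sub_inv_smul_of_differentiable_on_off_countable
      Set.countable_empty ha' hc (fun z hz => hd z hz.1)
  have cont2 : ContinuousOn
      (fun z => ((starRingEnd ℂ) a * ((ρ:ℂ)^2 - (starRingEnd ℂ) a * z)⁻¹) * f z)
      (closedBall (0:ℂ) ρ) :=
    (continuousOn_const.mul ((continuousOn_const.sub
      (continuousOn_const.mul continuousOn_id)).inv₀ hden)).mul hc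
  have h2 : (∮ z in C(0, ρ),
      ((starRingEnd ℂ) a * ((ρ:ℂ)^2 - (starRingEnd ℂ) a * z)⁻¹) * f z) = 0 := by
    refine Complex.circleIntegral_eq_zero_of_differentiable_on_off_countable hρ.le
      Set.countable_empty cont2 (fun z hz => ?_)
    have hi : DifferentiableAt ℂ
        (fun w => (starRingEnd ℂ) a * ((ρ:ℂ)^2 - (starRingEnd ℂ) a * w)⁻¹) z :=
      (differentiableAt_const _).fun_mul (((differentiableAt_const _).fun_sub
        ((differentiableAt_const _).fun_mul differentiableAt_fun_id)).fun_inv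
          (hden z (ball_subset_closedBall hz.1)))
    exact hi.fun_mul (hd z hz.1)
  have hsub : ∀ z ∈ sphere (0:ℂ) ρ, z - a ≠ 0 := by
    intro z hz
    refine sub_ne_zero.mpr ?_
    rintro rfl
    rw [mem_sphere_zero_iff_norm, Complex.norm_eq_abs] at hz
    exact ha.ne hz
  have i1 : CircleIntegrable (fun z => (z - a)⁻¹ • f z) 0 ρ :=
    (((continuousOn_id.sub continuousOn_const).inv₀ hsub).smul
      (hc.mono sphere_subset_closedBall)).circleIntegrable hρ.le
  have i2 : CircleIntegrable
      (fun z => ((starRingEnd ℂ) a * ((ρ:ℂ)^2 - (starRingEnd ℂ) a * z)⁻¹) * f z) 0 ρ :=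
    (cont2.mono sphere_subset_closedBall).circleIntegrable hρ.le
  have icomb : CircleIntegrable (fun z =>
      ((z - a)⁻¹ + (starRingEnd ℂ) a * ((ρ:ℂ)^2 - (starRingEnd ℂ) a * z)⁻¹) * f z) 0 ρ := by
    refine ContinuousOn.circleIntegrable hρ.le ?_
    exact (((continuousOn_id.sub continuousOn_const).inv₀ hsub).add
      (continuousOn_const.mul ((continuousOn_const.sub
        (continuousOn_const.mul continuousOn_id)).inv₀
          (fun z hz => hden z (sphere_subset_closedBall hz))))).mul
      (hc.mono sphere_subset_closedBall)
  have hcomb : (∮ z in C(0, ρ),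
      ((z - a)⁻¹ + (starRingEnd ℂ) a * ((ρ:ℂ)^2 - (starRingEnd ℂ) a * z)⁻¹) * f z)
      = (2 * π * I : ℂ) • f a := by
    have hs := circleIntegral.integral_sub icomb i2
    have hsubfn : (∮ z in C(0, ρ),
        (((z - a)⁻¹ + (starRingEnd ℂ) a * ((ρ:ℂ)^2 - (starRingEnd ℂ) a * z)⁻¹) * f z
          - ((starRingEnd ℂ) a * ((ρ:ℂ)^2 - (starRingEnd ℂ) a * z)⁻¹) * f z))
        = ∮ z in C(0, ρ), (z - a)⁻¹ • f z := by
      refine circleIntegral.integral_congr hρ.le (fun z _ => ?_)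
      simp only [smul_eq_mul]; ring
    rw [hsubfn, h1, h2, sub_zero] at hs
    exact hs.symm
  have hunfold : (∮ z in C(0, ρ),
      ((z - a)⁻¹ + (starRingEnd ℂ) a * ((ρ:ℂ)^2 - (starRingEnd ℂ) a * z)⁻¹) * f z)
      = I * ∫ t in (0:ℝ)..(2*π),
        (((ρ^2 - (Complex.abs a)^2) / (Complex.abs (circleMap 0 ρ t - a))^2 : ℝ) : ℂ)
          * f (circleMap 0 ρ t) := by
    rw [circleIntegral, ← intervalIntegral.integral_const_mul]
    refine intervalIntegral.integral_congr (fun t _ => ?_)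
    rw [deriv_circleMap, smul_eq_mul]
    have habs : Complex.abs (circleMap 0 ρ t) = ρ := by
      rw [abs_circleMap_zero, abs_of_pos hρ]
    rw [show circleMap 0 ρ t * I *
        (((circleMap 0 ρ t - a)⁻¹ +
          (starRingEnd ℂ) a * ((ρ:ℂ)^2 - (starRingEnd ℂ) a * circleMap 0 ρ t)⁻¹)
            * f (circleMap 0 ρ t))
        = I * ((circleMap 0 ρ t *
            ((circleMap 0 ρ t - a)⁻¹ +
              (starRingEnd ℂ) a * ((ρ:ℂ)^2 - (starRingEnd ℂ) a * circleMap 0 ρ t)⁻¹))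
                * f (circleMap 0 ρ t)) by ring,
      poisson_kernel_eq hρ ha habs]
  rw [hunfold] at hcomb
  have hI : (I : ℂ) ≠ 0 := I_ne_zero
  have h2pi : (2 * π : ℂ) ≠ 0 := by
    simp [Real.pi_ne_zero, Complex.ofReal_ne_zero]
  rw [smul_eq_mul] at hcomb
  have hX : (∫ t in (0:ℝ)..(2*π),
      (((ρ^2 - (Complex.abs a)^2) / (Complex.abs (circleMap 0 ρ t - a))^2 : ℝ) : ℂ)
        * f (circleMap 0 ρ t)) = 2 * (π:ℂ) * f a :=
    mul_left_cancel₀ hI (by linear_combination hcomb)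
  rw [hX, inv_mul_cancel_left₀ h2pi]

lemma poisson_total_mass {ρ : ℝ} (hρ : 0 < ρ) {a : ℂ} (ha : Complex.abs a < ρ) :
    (∫ t in (0:ℝ)..(2*π),
      (ρ^2 - (Complex.abs a)^2) / (Complex.abs (circleMap 0 ρ t - a))^2) = 2 * π := by
  have h := poisson_rep hρ (f := fun _ => (1:ℂ)) continuousOn_const
    (fun z _ => differentiableAt_const _) ha
  simp only [mul_one] at h
  rw [intervalIntegral.integral_ofReal] at h
  have h2pi : (2 * π : ℂ) ≠ 0 := by
    simp [Real.pi_ne_zero, Complex.ofReal_ne_zero]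
  have key : ((∫ t in (0:ℝ)..(2*π),
      (ρ^2 - (Complex.abs a)^2) / (Complex.abs (circleMap 0 ρ t - a))^2 : ℝ) : ℂ)
      = ((2 * π : ℝ) : ℂ) := by
    push_cast
    field_simp at h
    exact h.symm
  exact_mod_cast key

lemma poisson_abs_le {ρ : ℝ} (hρ : 0 < ρ) {f : ℂ → ℂ}
    (hc : ContinuousOn f (closedBall 0 ρ))
    (hd : ∀ z ∈ ball (0:ℂ) ρ, DifferentiableAt ℂ f z)
    {a : ℂ} (ha : Complex.abs a < ρ) :
    Complex.abs (f a) ≤ (2 * π)⁻¹ * ∫ t in (0:ℝ)..(2*π),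
      (ρ^2 - (Complex.abs a)^2) / (Complex.abs (circleMap 0 ρ t - a))^2
        * Complex.abs (f (circleMap 0 ρ t)) := by
  have hP : ∀ t : ℝ, 0 ≤ (ρ^2 - (Complex.abs a)^2) / (Complex.abs (circleMap 0 ρ t - a))^2 := by
    intro t
    apply div_nonneg
    · nlinarith [Complex.abs.nonneg a]
    · positivity
  rw [poisson_rep hρ hc hd ha, map_mul]
  have h1 : Complex.abs ((2 * (π:ℂ))⁻¹) = (2*π)⁻¹ := by
    rw [show ((2 * (π:ℂ)))⁻¹ = (((2*π:ℝ)):ℂ)⁻¹ by push_cast; ring, map_inv₀,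
      Complex.abs_ofReal, abs_of_pos Real.two_pi_pos]
  rw [h1]
  refine mul_le_mul_of_nonneg_left ?_ (by positivity)
  calc Complex.abs (∫ t in (0:ℝ)..(2*π),
        (((ρ^2 - (Complex.abs a)^2) / (Complex.abs (circleMap 0 ρ t - a))^2 : ℝ) : ℂ)
          * f (circleMap 0 ρ t))
      ≤ ∫ t in (0:ℝ)..(2*π), ‖(((ρ^2 - (Complex.abs a)^2)
          / (Complex.abs (circleMap 0 ρ t - a))^2 : ℝ) : ℂ) * f (circleMap 0 ρ t)‖ := by
        rw [← Complex.norm_eq_abs]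
        exact intervalIntegral.norm_integral_le_integral_norm Real.two_pi_pos.le
    _ = ∫ t in (0:ℝ)..(2*π), (ρ^2 - (Complex.abs a)^2)
          / (Complex.abs (circleMap 0 ρ t - a))^2 * Complex.abs (f (circleMap 0 ρ t)) := by
        refine intervalIntegral.integral_congr (fun t _ => ?_)
        rw [norm_mul, Complex.norm_eq_abs, Complex.norm_eq_abs, Complex.abs_ofReal,
          _root_.abs_of_nonneg (hP t)]

lemma abs_circle_symm (ρ r t θ : ℝ) :
    Complex.abs (circleMap 0 ρ t - circleMap 0 r θ)
      = Complex.abs (circleMap 0 ρ θ - circleMap 0 r t) := by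
  simp only [circleMap, zero_add]
  have key : (ρ:ℂ) * Complex.exp (θ*I) - (r:ℂ) * Complex.exp (t*I)
      = Complex.exp (θ*I) * Complex.exp (t*I)
        * (starRingEnd ℂ) ((ρ:ℂ) * Complex.exp (t*I) - (r:ℂ) * Complex.exp (θ*I)) := by
    rw [map_sub, map_mul, map_mul, Complex.conj_ofReal, Complex.conj_ofReal,
      ← Complex.exp_conj, ← Complex.exp_conj]
    simp only [map_mul, Complex.conj_ofReal, Complex.conj_I, mul_neg]
    rw [Complex.exp_neg, Complex.exp_neg]
    field_simp [Complex.exp_ne_zero]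
  rw [show (ρ:ℂ) * Complex.exp (↑θ*I) - (r:ℂ) * Complex.exp (↑t*I)
      = Complex.exp (↑θ*I) * Complex.exp (↑t*I)
        * (starRingEnd ℂ) ((ρ:ℂ) * Complex.exp (↑t*I) - (r:ℂ) * Complex.exp (↑θ*I)) from key,
    map_mul, map_mul, Complex.abs_conj, Complex.abs_exp, Complex.abs_exp]
  simp
/-- The radial `L¹` means of a function analytic in the unit disc are nondecreasing. -/
theorem radial_L1_means_monotone (f : ℂ → ℂ)
    (hf : DifferentiableOn ℂ f (ball (0 : ℂ) 1))
    (r ρ : ℝ) (hr : 0 ≤ r) (hrρ : r ≤ ρ) (hρ : ρ < 1) :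
    (2 * π)⁻¹ * ∫ θ in (0 : ℝ)..(2 * π),
        ‖f (r * Complex.exp (θ * Complex.I))‖
      ≤ (2 * π)⁻¹ * ∫ θ in (0 : ℝ)..(2 * π),
        ‖f (ρ * Complex.exp (θ * Complex.I))‖ := by
  rcases eq_or_lt_of_le hrρ with rfl | hlt
  · exact le_rfl
  have hρ0 : 0 < ρ := hr.trans_lt hlt
  have hcm : ∀ (s θ : ℝ), (s:ℂ) * Complex.exp (θ * Complex.I) = circleMap 0 s θ := by
    intro s θ; simp [circleMap]
  simp only [hcm]
  refine mul_le_mul_of_nonneg_left ?_ (by positivity)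
  -- basic facts
  have hcρ : ContinuousOn f (closedBall 0 ρ) :=
    hf.continuousOn.mono (closedBall_subset_ball hρ)
  have hdρ : ∀ z ∈ ball (0:ℂ) ρ, DifferentiableAt ℂ f z := fun z hz =>
    hf.differentiableAt (isOpen_ball.mem_nhds (ball_subset_ball hρ.le hz))
  have hmemρ : ∀ s : ℝ, |s| ≤ ρ → ∀ t : ℝ, circleMap 0 s t ∈ closedBall (0:ℂ) ρ := by
    intro s hs t
    rw [mem_closedBall_zero_iff, Complex.norm_eq_abs, abs_circleMap_zero]
    exact hs
  have habsr : ∀ θ : ℝ, Complex.abs (circleMap 0 r θ) = r := by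
    intro θ; rw [abs_circleMap_zero, _root_.abs_of_nonneg hr]
  have hfρ : Continuous fun t : ℝ => Complex.abs (f (circleMap 0 ρ t)) :=
    Complex.continuous_abs.comp (hcρ.comp_continuous (continuous_circleMap 0 ρ)
      (hmemρ ρ (by rw [_root_.abs_of_pos hρ0]) ))
  have hfr : Continuous fun θ : ℝ => Complex.abs (f (circleMap 0 r θ)) :=
    Complex.continuous_abs.comp (hcρ.comp_continuous (continuous_circleMap 0 r)
      (hmemρ r (by rw [_root_.abs_of_nonneg hr]; exact hlt.le)))
  set F : ℝ → ℝ → ℝ := fun θ t =>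
    (ρ^2 - r^2) / (Complex.abs (circleMap 0 ρ t - circleMap 0 r θ))^2
      * Complex.abs (f (circleMap 0 ρ t)) with hF
  have hne : ∀ θ t : ℝ, circleMap 0 ρ t - circleMap 0 r θ ≠ 0 := by
    intro θ t h
    rw [sub_eq_zero] at h
    have h2 := congrArg Complex.abs h
    rw [abs_circleMap_zero, abs_circleMap_zero, _root_.abs_of_pos hρ0,
      _root_.abs_of_nonneg hr] at h2
    exact hlt.ne' h2
  have hFcont : Continuous (Function.uncurry F) := by
    apply Continuous.mul
    · apply Continuous.div continuous_const
      · exact (Complex.continuous_abs.comp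
          (((continuous_circleMap 0 ρ).comp continuous_snd).sub
            ((continuous_circleMap 0 r).comp continuous_fst))).pow 2
      · intro p
        exact pow_ne_zero 2 (Complex.abs.ne_zero (hne p.1 p.2))
    · exact hfρ.comp continuous_snd
  -- pointwise Poisson bound
  have hpt : ∀ θ ∈ Set.Icc (0:ℝ) (2*π),
      Complex.abs (f (circleMap 0 r θ))
        ≤ (2*π)⁻¹ * ∫ t in (0:ℝ)..(2*π), F θ t := by
    intro θ _
    have ha : Complex.abs (circleMap 0 r θ) < ρ := by rw [habsr]; exact hlt
    have h := poisson_abs_le hρ0 hcρ hdρ ha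
    rw [habsr] at h
    exact h
  -- continuity of the parametric integral
  have hRHS : Continuous fun θ : ℝ => (2*π)⁻¹ * ∫ t in (0:ℝ)..(2*π), F θ t :=
    continuous_const.mul
      (intervalIntegral.continuous_parametric_intervalIntegral_of_continuous' hFcont 0 (2*π))
  have step1 : (∫ θ in (0:ℝ)..(2*π), Complex.abs (f (circleMap 0 r θ)))
      ≤ ∫ θ in (0:ℝ)..(2*π), (2*π)⁻¹ * ∫ t in (0:ℝ)..(2*π), F θ t :=
    intervalIntegral.integral_mono_on Real.two_pi_pos.le
      (hfr.intervalIntegrable _ _) (hRHS.intervalIntegrable _ _) hpt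
  -- Fubini
  have hint : Integrable (Function.uncurry F)
      ((volume.restrict (Set.Ioc (0:ℝ) (2*π))).prod
        (volume.restrict (Set.Ioc (0:ℝ) (2*π)))) := by
    rw [Measure.prod_restrict]
    have h1 : IntegrableOn (Function.uncurry F)
        (Set.Icc (0:ℝ) (2*π) ×ˢ Set.Icc (0:ℝ) (2*π)) (volume.prod volume) :=
      hFcont.continuousOn.integrableOn_compact (isCompact_Icc.prod isCompact_Icc)
    exact h1.mono_set (Set.prod_mono Set.Ioc_subset_Icc_self Set.Ioc_subset_Icc_self)
  have fub : (∫ θ in (0:ℝ)..(2*π), ∫ t in (0:ℝ)..(2*π), F θ t)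
      = ∫ t in (0:ℝ)..(2*π), ∫ θ in (0:ℝ)..(2*π), F θ t := by
    rw [intervalIntegral.integral_of_le Real.two_pi_pos.le,
      intervalIntegral.integral_of_le Real.two_pi_pos.le]
    simp_rw [intervalIntegral.integral_of_le Real.two_pi_pos.le]
    exact MeasureTheory.integral_integral_swap hint
  -- evaluate the inner integral using the total mass of the Poisson kernel
  have inner : ∀ t : ℝ, (∫ θ in (0:ℝ)..(2*π), F θ t)
      = 2 * π * Complex.abs (f (circleMap 0 ρ t)) := by
    intro t
    rw [hF]
    rw [intervalIntegral.integral_mul_const]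
    have hcongr : (∫ θ in (0:ℝ)..(2*π),
        (ρ^2 - r^2) / (Complex.abs (circleMap 0 ρ t - circleMap 0 r θ))^2)
        = ∫ θ in (0:ℝ)..(2*π),
          (ρ^2 - (Complex.abs (circleMap 0 r t))^2)
            / (Complex.abs (circleMap 0 ρ θ - circleMap 0 r t))^2 := by
      refine intervalIntegral.integral_congr (fun θ _ => ?_)
      rw [abs_circle_symm, habsr]
    rw [hcongr, poisson_total_mass hρ0 (a := circleMap 0 r t) (by rw [habsr]; exact hlt)]
  calc (∫ θ in (0:ℝ)..(2*π), Complex.abs (f (circleMap 0 r θ)))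
      ≤ ∫ θ in (0:ℝ)..(2*π), (2*π)⁻¹ * ∫ t in (0:ℝ)..(2*π), F θ t := step1
    _ = (2*π)⁻¹ * ∫ θ in (0:ℝ)..(2*π), ∫ t in (0:ℝ)..(2*π), F θ t :=
        intervalIntegral.integral_const_mul _ _
    _ = (2*π)⁻¹ * ∫ t in (0:ℝ)..(2*π), ∫ θ in (0:ℝ)..(2*π), F θ t := by rw [fub]
    _ = (2*π)⁻¹ * ∫ t in (0:ℝ)..(2*π), 2 * π * Complex.abs (f (circleMap 0 ρ t)) := by
        rw [intervalIntegral.integral_congr (fun t _ => inner t)]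
    _ = ∫ t in (0:ℝ)..(2*π), Complex.abs (f (circleMap 0 ρ t)) := by
        rw [intervalIntegral.integral_const_mul, ← mul_assoc,
          inv_mul_cancel₀ Real.two_pi_pos.ne', one_mul]
end

section
/- If g is holomorphic on a neighborhood of the closed disc of radius ρ (so its power series at 0 converges absolutely for |z| ≤ ρ) and 0 ≤ r ≤ ρ, then ‖g_r − g_ρ‖₂ ≤ √(‖g_ρ‖₂² − ‖g_r‖₂²), where ‖g_r‖₂² = (1/2π)∫₀^{2π}|g(re^{iθ})|² dθ. -/
open MeasureTheory Real Complex Metric Filter Topology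

lemma ortho_aux (r s : ℝ) (n m : ℕ) :
    (∫ θ in (0:ℝ)..(2*π), ((r:ℂ) * Complex.exp (θ * Complex.I))^n *
      (starRingEnd ℂ) (((s:ℂ) * Complex.exp (θ * Complex.I))^m))
    = if n = m then (2*π*(r^n*s^n) : ℂ) else 0 := by
  have hcong : ∀ θ : ℝ, ((r:ℂ) * Complex.exp (θ * Complex.I))^n *
      (starRingEnd ℂ) (((s:ℂ) * Complex.exp (θ * Complex.I))^m)
      = (r^n*s^m : ℂ) * Complex.exp ((((n:ℤ) - m : ℤ) : ℂ) * Complex.I * θ) := by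
    intro θ
    rw [mul_pow, mul_pow, map_mul, map_pow, map_pow, Complex.conj_ofReal,
      ← Complex.exp_conj]
    simp only [map_mul, Complex.conj_ofReal, Complex.conj_I, mul_neg,
      ← Complex.exp_nat_mul]
    have e : ∀ x y : ℂ, (r:ℂ)^n * Complex.exp x * ((s:ℂ)^m * Complex.exp y)
        = (r:ℂ)^n * (s:ℂ)^m * (Complex.exp x * Complex.exp y) := by intros; ring
    rw [e, ← Complex.exp_add]
    congr 1
    push_cast
    ring
  rw [intervalIntegral.integral_congr (fun θ _ => hcong θ),
    intervalIntegral.integral_const_mul]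
  by_cases h : n = m
  · subst h
    simp only [sub_self, if_pos rfl]
    push_cast
    simp [Complex.exp_zero]
    ring
  · rw [if_neg h]
    have hc : ((((n:ℤ) - m : ℤ) : ℂ)) * Complex.I ≠ 0 := by
      simp only [ne_eq, mul_eq_zero, Complex.I_ne_zero, or_false]
      exact_mod_cast sub_ne_zero.mpr (fun hh : (n:ℤ) = m => h (by exact_mod_cast hh))
    rw [integral_exp_mul_complex hc]
    have h1 : ((((n:ℤ) - m : ℤ) : ℂ)) * Complex.I * ((2*π : ℝ) : ℂ)
        = (((n:ℤ) - m : ℤ) : ℂ) * (2*π*Complex.I) := by push_cast; ring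
    rw [h1, Complex.exp_int_mul_two_pi_mul_I]
    simp

lemma key_integral (g : ℂ → ℂ) (a : ℕ → ℂ) (ρ : ℝ)
    (hsum : Summable fun n => ‖a n‖ * ρ^n)
    (hrep : ∀ s : ℝ, 0 ≤ s → s ≤ ρ → ∀ θ : ℝ,
      HasSum (fun n => a n * ((s:ℂ) * Complex.exp (θ * Complex.I))^n)
        (g ((s:ℂ) * Complex.exp (θ * Complex.I))))
    (r s : ℝ) (hr : 0 ≤ r) (hrρ : r ≤ ρ) (hs : 0 ≤ s) (hsρ : s ≤ ρ) :
    (∫ θ in (0:ℝ)..(2*π), g ((r:ℂ) * Complex.exp (θ * Complex.I)) *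
      (starRingEnd ℂ) (g ((s:ℂ) * Complex.exp (θ * Complex.I))))
    = 2*π * ((∑' n, ‖a n‖^2 * (r*s)^n : ℝ) : ℂ) := by
  have hρ : 0 ≤ ρ := hr.trans hrρ
  set M : ℝ := ∑' n, ‖a n‖ * ρ^n with hM
  have hMnn : ∀ n, (0:ℝ) ≤ ‖a n‖ * ρ^n := fun n =>
    mul_nonneg (norm_nonneg _) (pow_nonneg hρ n)
  have hM0 : 0 ≤ M := tsum_nonneg hMnn
  -- term bound
  have habs : ∀ n, ∀ t : ℝ, 0 ≤ t → t ≤ ρ → ∀ θ : ℝ,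
      ‖a n * ((t:ℂ) * Complex.exp (θ * Complex.I))^n‖ ≤ ‖a n‖ * ρ^n := by
    intro n t ht htρ θ
    rw [norm_mul, norm_pow, norm_mul, Complex.norm_real, Complex.norm_exp_ofReal_mul_I,
      mul_one, Real.norm_of_nonneg ht]
    exact mul_le_mul_of_nonneg_left (pow_le_pow_left₀ ht htρ n) (norm_nonneg _)
  -- partial sum bound
  have hpsum : ∀ N : ℕ, ∀ t : ℝ, 0 ≤ t → t ≤ ρ → ∀ θ : ℝ,
      ‖∑ n ∈ Finset.range N, a n * ((t:ℂ) * Complex.exp (θ * Complex.I))^n‖ ≤ M := by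
    intro N t ht htρ θ
    refine (norm_sum_le _ _).trans ?_
    refine (Finset.sum_le_sum fun n _ => habs n t ht htρ θ).trans ?_
    exact Summable.sum_le_tsum _ (fun n _ => hMnn n) hsum
  -- summability of the target series
  have hwle : ∀ n, ‖a n‖^2 * (r*s)^n ≤ M * (‖a n‖ * ρ^n) := by
    intro n
    have h1 : ‖a n‖^2 * (r*s)^n ≤ (‖a n‖ * ρ^n) * (‖a n‖ * ρ^n) := by
      have : (r*s)^n ≤ (ρ*ρ)^n :=
        pow_le_pow_left₀ (mul_nonneg hr hs) (mul_le_mul hrρ hsρ hs hρ) n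
      calc ‖a n‖^2 * (r*s)^n ≤ ‖a n‖^2 * (ρ*ρ)^n :=
            mul_le_mul_of_nonneg_left this (by positivity)
        _ = (‖a n‖ * ρ^n) * (‖a n‖ * ρ^n) := by rw [mul_pow]; ring
    exact h1.trans (mul_le_mul_of_nonneg_right
      (Summable.le_tsum hsum n fun m _ => hMnn m) (hMnn n))
  have hwnn : ∀ n, (0:ℝ) ≤ ‖a n‖^2 * (r*s)^n := fun n =>
    mul_nonneg (by positivity) (pow_nonneg (mul_nonneg hr hs) n)
  have hw : Summable fun n => ‖a n‖^2 * (r*s)^n :=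
    Summable.of_nonneg_of_le hwnn hwle (hsum.mul_left M)
  -- the approximating sequence
  set F : ℕ → ℝ → ℂ := fun N θ =>
    (∑ n ∈ Finset.range N, a n * ((r:ℂ) * Complex.exp (θ * Complex.I))^n) *
    (starRingEnd ℂ) (∑ m ∈ Finset.range N, a m * ((s:ℂ) * Complex.exp (θ * Complex.I))^m)
    with hF
  have hcc : ∀ (t : ℝ) (m : ℕ), Continuous fun θ : ℝ => ((t:ℂ) * Complex.exp (θ * Complex.I))^m :=
    fun t m => by fun_prop
  have hterm : ∀ (c : ℂ) (n m : ℕ), Continuous fun θ : ℝ =>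
      c * (((r:ℂ) * Complex.exp (θ * Complex.I))^n *
        (starRingEnd ℂ) (((s:ℂ) * Complex.exp (θ * Complex.I))^m)) :=
    fun c n m => continuous_const.mul ((hcc r n).mul (Complex.continuous_conj.comp (hcc s m)))
  have hFcont : ∀ N, Continuous (F N) := by
    intro N
    apply Continuous.mul
    · exact continuous_finset_sum _ fun n _ => by fun_prop
    · exact Complex.continuous_conj.comp (continuous_finset_sum _ fun n _ => by fun_prop)
  -- value of ∫ F N
  have hFval : ∀ N : ℕ, (∫ θ in (0:ℝ)..(2*π), F N θ)
      = ∑ n ∈ Finset.range N, (2*π : ℂ) * ((‖a n‖^2 * (r*s)^n : ℝ) : ℂ) := by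
    intro N
    have hexp : ∀ θ : ℝ, F N θ = ∑ n ∈ Finset.range N, ∑ m ∈ Finset.range N,
        (a n * (starRingEnd ℂ) (a m)) *
          (((r:ℂ) * Complex.exp (θ * Complex.I))^n *
            (starRingEnd ℂ) (((s:ℂ) * Complex.exp (θ * Complex.I))^m)) := by
      intro θ
      rw [hF]
      simp only [map_sum, map_mul, Finset.sum_mul_sum]
      refine Finset.sum_congr rfl fun n _ => Finset.sum_congr rfl fun m _ => by ring
    rw [intervalIntegral.integral_congr (fun θ _ => hexp θ)]
    rw [intervalIntegral.integral_finset_sum]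
    · have : ∀ n ∈ Finset.range N,
          (∫ θ in (0:ℝ)..(2*π), ∑ m ∈ Finset.range N,
            (a n * (starRingEnd ℂ) (a m)) *
              (((r:ℂ) * Complex.exp (θ * Complex.I))^n *
                (starRingEnd ℂ) (((s:ℂ) * Complex.exp (θ * Complex.I))^m)))
          = (2*π : ℂ) * ((‖a n‖^2 * (r*s)^n : ℝ) : ℂ) := by
        intro n hn
        rw [intervalIntegral.integral_finset_sum]
        · have : ∀ m ∈ Finset.range N,
              (∫ θ in (0:ℝ)..(2*π), (a n * (starRingEnd ℂ) (a m)) *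
                (((r:ℂ) * Complex.exp (θ * Complex.I))^n *
                  (starRingEnd ℂ) (((s:ℂ) * Complex.exp (θ * Complex.I))^m)))
              = if n = m then (a n * (starRingEnd ℂ) (a n)) * (2*π*(r^n*s^n) : ℂ) else 0 := by
            intro m _
            rw [intervalIntegral.integral_const_mul, ortho_aux]
            by_cases h : n = m
            · subst h; simp
            · simp [h]
          rw [Finset.sum_congr rfl this, Finset.sum_ite_eq (Finset.range N) n
            (fun m => (a n * (starRingEnd ℂ) (a n)) * (2*π*(r^n*s^n) : ℂ)), if_pos hn]
          rw [Complex.mul_conj]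
          push_cast [Complex.normSq_eq_norm_sq]
          ring
        · intro m _
          exact (hterm _ n m).intervalIntegrable _ _
      rw [Finset.sum_congr rfl this]
    · intro n _
      exact (continuous_finset_sum _ fun m _ => hterm _ n m).intervalIntegrable _ _
  -- limit of ∫ F N via dominated convergence
  have hlim : Tendsto (fun N => ∫ θ in (0:ℝ)..(2*π), F N θ) atTop
      (𝓝 (∫ θ in (0:ℝ)..(2*π), g ((r:ℂ) * Complex.exp (θ * Complex.I)) *
        (starRingEnd ℂ) (g ((s:ℂ) * Complex.exp (θ * Complex.I))))) := by
    apply intervalIntegral.tendsto_integral_filter_of_dominated_convergence (fun _ => M * M)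
    · exact Eventually.of_forall fun N => (hFcont N).aestronglyMeasurable
    · refine Eventually.of_forall fun N => ae_of_all _ fun θ _ => ?_
      rw [hF, norm_mul, RCLike.norm_conj]
      exact mul_le_mul (hpsum N r hr hrρ θ) (hpsum N s hs hsρ θ) (norm_nonneg _)
        hM0
    · exact intervalIntegrable_const
    · refine ae_of_all _ fun θ _ => ?_
      exact ((hrep r hr hrρ θ).tendsto_sum_nat.mul
        ((Complex.continuous_conj.tendsto _).comp (hrep s hs hsρ θ).tendsto_sum_nat))
  -- limit of partial sums
  have hlim2 : Tendsto (fun N => ∑ n ∈ Finset.range N,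
      (2*π : ℂ) * ((‖a n‖^2 * (r*s)^n : ℝ) : ℂ)) atTop
      (𝓝 (2*π * ((∑' n, ‖a n‖^2 * (r*s)^n : ℝ) : ℂ))) := by
    have h1 := hw.hasSum.tendsto_sum_nat
    have h2 : Tendsto (fun x : ℝ => (2*π : ℂ) * (x : ℂ)) (𝓝 (∑' n, ‖a n‖^2 * (r*s)^n))
        (𝓝 (2*π * ((∑' n, ‖a n‖^2 * (r*s)^n : ℝ) : ℂ))) :=
      ((Complex.continuous_ofReal.tendsto _).const_mul _)
    refine (h2.comp h1).congr fun N => ?_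
    simp [Finset.mul_sum, Function.comp]
  exact tendsto_nhds_unique hlim (hlim2.congr fun N => (hFval N).symm)

/-- If `g` is holomorphic on a neighborhood `{|z| < ρ + ε}` of the closed disc of
radius `ρ` and `0 ≤ r ≤ ρ`, then `‖g_r − g_ρ‖₂ ≤ √(‖g_ρ‖₂² − ‖g_r‖₂²)`, where the
`L²` norms are with respect to normalized arc length measure. -/
theorem L2_dilation_difference (g : ℂ → ℂ) (ρ ε : ℝ) (hε : 0 < ε)
    (hg : DifferentiableOn ℂ g (ball (0 : ℂ) (ρ + ε)))
    (r : ℝ) (hr : 0 ≤ r) (hrρ : r ≤ ρ) :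
    Real.sqrt ((2 * π)⁻¹ * ∫ θ in (0 : ℝ)..(2 * π),
        ‖g (r * Complex.exp (θ * Complex.I))
          - g (ρ * Complex.exp (θ * Complex.I))‖ ^ 2)
      ≤ Real.sqrt
          (((2 * π)⁻¹ * ∫ θ in (0 : ℝ)..(2 * π),
              ‖g (ρ * Complex.exp (θ * Complex.I))‖ ^ 2)
            - ((2 * π)⁻¹ * ∫ θ in (0 : ℝ)..(2 * π),
              ‖g (r * Complex.exp (θ * Complex.I))‖ ^ 2)) := by
  have hρ0 : 0 ≤ ρ := hr.trans hrρ
  have hRpos : (0:ℝ) < ρ + ε/2 := by linarith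
  set R : NNReal := ⟨ρ + ε/2, hRpos.le⟩ with hRdef
  have hgc : DifferentiableOn ℂ g (closedBall (0:ℂ) (R:ℝ)) :=
    hg.mono (closedBall_subset_ball (by show ρ + ε/2 < ρ + ε; linarith))
  have hR : 0 < R := by exact_mod_cast hRpos
  have hB : HasFPowerSeriesOnBall g (cauchyPowerSeries g 0 R) 0 R :=
    hgc.hasFPowerSeriesOnBall hR
  set p := cauchyPowerSeries g 0 R with hp
  set a : ℕ → ℂ := fun n => p.coeff n with ha
  have hρR : ρ < (R:ℝ) := by show ρ < ρ + ε/2; linarith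
  set rr : NNReal := ⟨ρ, hρ0⟩ with hrr
  have hrad : (rr : ENNReal) < p.radius := by
    refine lt_of_lt_of_le ?_ hB.r_le
    rw [ENNReal.coe_lt_coe, ← NNReal.coe_lt_coe]
    exact hρR
  have hsump : Summable fun n => ‖p n‖ * ρ^n := by
    have := p.summable_norm_mul_pow hrad
    exact this
  have hsum : Summable fun n => ‖a n‖ * ρ^n := by
    refine Summable.of_nonneg_of_le
      (fun n => mul_nonneg (norm_nonneg _) (pow_nonneg hρ0 n))
      (fun n => mul_le_mul_of_nonneg_right ?_ (pow_nonneg hρ0 n)) hsump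
    exact (p.norm_apply_eq_norm_coef (n := n)).ge
  have hrep : ∀ s : ℝ, 0 ≤ s → s ≤ ρ → ∀ θ : ℝ,
      HasSum (fun n => a n * ((s:ℂ) * Complex.exp (θ * Complex.I))^n)
        (g ((s:ℂ) * Complex.exp (θ * Complex.I))) := by
    intro s hs hsρ θ
    have hy : ((s:ℂ) * Complex.exp (θ * Complex.I)) ∈ Metric.eball (0:ℂ) R := by
      rw [mem_eball_zero_iff, enorm_eq_nnnorm, ENNReal.coe_lt_coe, ← NNReal.coe_lt_coe, coe_nnnorm]
      simp only [norm_mul, Complex.norm_real,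
        Complex.norm_exp_ofReal_mul_I, mul_one, Real.norm_of_nonneg hs]
      calc s ≤ ρ := hsρ
        _ < (R:ℝ) := hρR
    have h0 := hB.hasSum hy
    rw [zero_add] at h0
    refine h0.congr_fun fun n => ?_
    rw [FormalMultilinearSeries.apply_eq_pow_smul_coeff, smul_eq_mul]
    ring
  
  have hT : ∀ s t : ℝ, 0 ≤ s → s ≤ ρ → 0 ≤ t → t ≤ ρ →
      (∫ θ in (0:ℝ)..(2*π), g ((s:ℂ) * Complex.exp (θ * Complex.I)) *
        (starRingEnd ℂ) (g ((t:ℂ) * Complex.exp (θ * Complex.I))))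
      = 2*π * ((∑' n, ‖a n‖^2 * (s*t)^n : ℝ) : ℂ) :=
    fun s t hs hsρ ht htρ => key_integral g a ρ hsum hrep s t hs hsρ ht htρ
  set T : ℝ → ℝ → ℝ := fun s t => ∑' n, ‖a n‖^2 * (s*t)^n with hTdef
  have hcont : ∀ s : ℝ, 0 ≤ s → s ≤ ρ →
      Continuous fun θ : ℝ => g ((s:ℂ) * Complex.exp (θ * Complex.I)) := by
    intro s hs hsρ
    apply hg.continuousOn.comp_continuous (by fun_prop)
    intro θ
    rw [mem_ball_zero_iff]
    simp only [norm_mul, Complex.norm_real,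
      Complex.norm_exp_ofReal_mul_I, mul_one, Real.norm_of_nonneg hs]
    linarith
  have hofReal : ∀ u : ℝ → ℝ, (∫ θ in (0:ℝ)..(2*π), ((u θ : ℝ) : ℂ))
      = (((∫ θ in (0:ℝ)..(2*π), u θ) : ℝ) : ℂ) := fun u => by
    exact RCLike.intervalIntegral_ofReal (𝕜 := ℂ)
  have hsq : ∀ s : ℝ, 0 ≤ s → s ≤ ρ →
      (∫ θ in (0:ℝ)..(2*π),
        ‖g ((s:ℂ) * Complex.exp (θ * Complex.I))‖^2) = 2*π * T s s := by
    intro s hs hsρ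
    apply Complex.ofReal_injective
    rw [← hofReal]
    have h1 : Set.EqOn (fun θ : ℝ =>
        ((‖g ((s:ℂ) * Complex.exp (θ * Complex.I))‖^2 : ℝ) : ℂ))
        (fun θ : ℝ => g ((s:ℂ) * Complex.exp (θ * Complex.I)) *
          (starRingEnd ℂ) (g ((s:ℂ) * Complex.exp (θ * Complex.I))))
        (Set.uIcc (0:ℝ) (2*π)) := by
      intro θ _
      simp only
      rw [Complex.sq_norm, Complex.mul_conj]
    rw [intervalIntegral.integral_congr h1, hT s s hs hsρ hs hsρ]
    simp only [hTdef]
    norm_cast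
  have hintg : ∀ s t : ℝ, 0 ≤ s → s ≤ ρ → 0 ≤ t → t ≤ ρ →
      IntervalIntegrable (fun θ : ℝ => g ((s:ℂ) * Complex.exp (θ * Complex.I)) *
        (starRingEnd ℂ) (g ((t:ℂ) * Complex.exp (θ * Complex.I)))) volume 0 (2*π) :=
    fun s t hs hsρ ht htρ => ((hcont s hs hsρ).mul
      (Complex.continuous_conj.comp (hcont t ht htρ))).intervalIntegrable _ _
  have hdiffint : (∫ θ in (0:ℝ)..(2*π),
      ‖g ((r:ℂ) * Complex.exp (θ * Complex.I))
        - g ((ρ:ℂ) * Complex.exp (θ * Complex.I))‖^2)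
      = 2*π * T r r - 2*π * T r ρ - 2*π * T ρ r + 2*π * T ρ ρ := by
    apply Complex.ofReal_injective
    rw [← hofReal]
    have h1 : Set.EqOn (fun θ : ℝ =>
        ((‖g ((r:ℂ) * Complex.exp (θ * Complex.I))
          - g ((ρ:ℂ) * Complex.exp (θ * Complex.I))‖^2 : ℝ) : ℂ))
        (fun θ : ℝ =>
          (g ((r:ℂ) * Complex.exp (θ * Complex.I)) *
            (starRingEnd ℂ) (g ((r:ℂ) * Complex.exp (θ * Complex.I)))
          - g ((r:ℂ) * Complex.exp (θ * Complex.I)) *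
            (starRingEnd ℂ) (g ((ρ:ℂ) * Complex.exp (θ * Complex.I))))
          - (g ((ρ:ℂ) * Complex.exp (θ * Complex.I)) *
            (starRingEnd ℂ) (g ((r:ℂ) * Complex.exp (θ * Complex.I)))
          - g ((ρ:ℂ) * Complex.exp (θ * Complex.I)) *
            (starRingEnd ℂ) (g ((ρ:ℂ) * Complex.exp (θ * Complex.I)))))
        (Set.uIcc (0:ℝ) (2*π)) := by
      intro θ _
      simp only
      rw [Complex.sq_norm, ← Complex.mul_conj, map_sub]
      ring
    rw [intervalIntegral.integral_congr h1,
      intervalIntegral.integral_sub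
        ((hintg r r hr hrρ hr hrρ).sub (hintg r ρ hr hrρ hρ0 le_rfl))
        ((hintg ρ r hρ0 le_rfl hr hrρ).sub (hintg ρ ρ hρ0 le_rfl hρ0 le_rfl)),
      intervalIntegral.integral_sub (hintg r r hr hrρ hr hrρ) (hintg r ρ hr hrρ hρ0 le_rfl),
      intervalIntegral.integral_sub (hintg ρ r hρ0 le_rfl hr hrρ) (hintg ρ ρ hρ0 le_rfl hρ0 le_rfl),
      hT r r hr hrρ hr hrρ, hT r ρ hr hrρ hρ0 le_rfl, hT ρ r hρ0 le_rfl hr hrρ,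
      hT ρ ρ hρ0 le_rfl hρ0 le_rfl]
    simp only [hTdef]
    norm_cast
    ring
  have hTsym : T ρ r = T r ρ := by
    simp only [hTdef]
    congr 1
    ext n
    rw [mul_comm ρ r]
  -- summability of the T-series
  have hwS : ∀ s t : ℝ, 0 ≤ s → s ≤ ρ → 0 ≤ t → t ≤ ρ →
      Summable fun n => ‖a n‖^2 * (s*t)^n := by
    intro s t hs hsρ ht htρ
    set M : ℝ := ∑' n, ‖a n‖ * ρ^n with hM
    have hMnn : ∀ n, (0:ℝ) ≤ ‖a n‖ * ρ^n := fun n =>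
      mul_nonneg (norm_nonneg _) (pow_nonneg hρ0 n)
    refine Summable.of_nonneg_of_le
      (fun n => mul_nonneg (by positivity) (pow_nonneg (mul_nonneg hs ht) n))
      (fun n => ?_) (hsum.mul_left M)
    have h1 : ‖a n‖^2 * (s*t)^n ≤ (‖a n‖ * ρ^n) * (‖a n‖ * ρ^n) := by
      have hp : (s*t)^n ≤ (ρ*ρ)^n :=
        pow_le_pow_left₀ (mul_nonneg hs ht) (mul_le_mul hsρ htρ ht hρ0) n
      calc ‖a n‖^2 * (s*t)^n ≤ ‖a n‖^2 * (ρ*ρ)^n :=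
            mul_le_mul_of_nonneg_left hp (by positivity)
        _ = (‖a n‖ * ρ^n) * (‖a n‖ * ρ^n) := by rw [mul_pow]; ring
    exact h1.trans (mul_le_mul_of_nonneg_right
      (Summable.le_tsum hsum n fun m _ => hMnn m) (hMnn n))
  have hTle : T r r ≤ T r ρ := by
    refine Summable.tsum_le_tsum (fun n => ?_) (hwS r r hr hrρ hr hrρ) (hwS r ρ hr hrρ hρ0 le_rfl)
    exact mul_le_mul_of_nonneg_left
      (pow_le_pow_left₀ (mul_nonneg hr hr) (mul_le_mul_of_nonneg_left hrρ hr) n)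
      (by positivity)
  rw [hdiffint, hsq ρ hρ0 le_rfl, hsq r hr hrρ, hTsym]
  apply Real.sqrt_le_sqrt
  have hπ : (2*π) ≠ 0 := by positivity
  have e1 : (2*π)⁻¹ * (2*π * T r r - 2*π * T r ρ - 2*π * T r ρ + 2*π * T ρ ρ)
      = T r r - 2 * T r ρ + T ρ ρ := by field_simp; ring
  have e2 : (2*π)⁻¹ * (2*π * T ρ ρ) - (2*π)⁻¹ * (2*π * T r r) = T ρ ρ - T r r := by
    field_simp
  rw [e1, e2]
  linarith
end

section
/- If μ is a finite complex Borel measure on the unit circle whose Fourier coefficients μ̂(k) vanish for all k < 0, then the Poisson extension 𝔓μ(z) = ∫₀^{2π} (1−|z|²)/|e^{iθ}−z|² dμ(e^{iθ}) is an analytic function of z on the open unit disc. -/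
open MeasureTheory Complex Metric

/-- The integral of a function against a complex measure, defined via the Jordan
decompositions of the real and imaginary parts. -/
noncomputable def cmIntegral {α : Type*} [MeasurableSpace α]
    (μ : MeasureTheory.ComplexMeasure α) (f : α → ℂ) : ℂ :=
  ((∫ x, f x ∂μ.re.toJordanDecomposition.posPart)
      - ∫ x, f x ∂μ.re.toJordanDecomposition.negPart)
    + Complex.I * ((∫ x, f x ∂μ.im.toJordanDecomposition.posPart)
      - ∫ x, f x ∂μ.im.toJordanDecomposition.negPart)

/-- The Poisson extension of a complex measure on the circle (modelled as
`AddCircle 1`, with `x` corresponding to the boundary point `e^{2πix}`). -/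
noncomputable def poissonExt (μ : MeasureTheory.ComplexMeasure (AddCircle (1 : ℝ)))
    (z : ℂ) : ℂ :=
  cmIntegral μ fun x =>
    (((1 - ‖z‖ ^ 2) / ‖(fourier 1 x : ℂ) - z‖ ^ 2 : ℝ) : ℂ)

namespace PoissonProof

open Filter Topology
open scoped ENNReal NNReal

lemma abs_fourier (n : ℤ) (x : AddCircle (1:ℝ)) : ‖(fourier n x : ℂ)‖ = 1 := by
  rw [fourier_apply]; exact Circle.norm_coe _

lemma fourier_ne_zero (n : ℤ) (x : AddCircle (1:ℝ)) : (fourier n x : ℂ) ≠ 0 := by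
  intro h
  have := abs_fourier n x
  rw [h] at this
  simp at this

lemma conj_fourier_one (x : AddCircle (1:ℝ)) :
    (starRingEnd ℂ) (fourier 1 x : ℂ) = (fourier 1 x : ℂ)⁻¹ := by
  have h : (starRingEnd ℂ) (fourier 1 x : ℂ) * (fourier 1 x : ℂ) = 1 := by
    rw [mul_comm, Complex.mul_conj, Complex.normSq_eq_norm_sq, abs_fourier]
    norm_num
  exact eq_inv_of_mul_eq_one_left h

lemma fourier_zpow (n : ℤ) (x : AddCircle (1:ℝ)) :
    (fourier n x : ℂ) = (fourier 1 x : ℂ) ^ n := by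
  induction n using Int.induction_on with
  | zero => rw [fourier_zero, zpow_zero]
  | succ i ih =>
    rw [fourier_add, ih, zpow_add_one₀ (fourier_ne_zero 1 x)]
  | pred i ih =>
    rw [show (-(i : ℤ) - 1) = -(i : ℤ) + (-1) from by ring, fourier_add, ih,
      fourier_neg, conj_fourier_one, zpow_add₀ (fourier_ne_zero 1 x), zpow_neg_one]

/-- The key pointwise expansion of the Poisson kernel. -/
lemma kernel_eq (z : ℂ) (hz : ‖z‖ < 1) (x : AddCircle (1:ℝ)) :
    (((1 - ‖z‖ ^ 2) / ‖(fourier 1 x : ℂ) - z‖ ^ 2 : ℝ) : ℂ)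
      = ∑' n : ℕ, ((starRingEnd ℂ) z ^ n * (fourier (n : ℤ) x : ℂ)
          + z ^ (n + 1) * (fourier (-(n + 1) : ℤ) x : ℂ)) := by
  set w : ℂ := (fourier 1 x : ℂ) with hw
  have habs : ‖w‖ = 1 := abs_fourier 1 x
  have hwne : w ≠ 0 := fourier_ne_zero 1 x
  have hcw : (starRingEnd ℂ) w = w⁻¹ := by rw [hw]; exact conj_fourier_one x
  have hc : ‖(starRingEnd ℂ) z * w‖ < 1 := by
    rw [norm_mul, RCLike.norm_conj, habs, mul_one]
    exact hz
  have hd : ‖z * w⁻¹‖ < 1 := by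
    rw [norm_mul, norm_inv, habs, inv_one, mul_one]
    exact hz
  have hterm : ∀ n : ℕ, (starRingEnd ℂ) z ^ n * (fourier (n : ℤ) x : ℂ)
      + z ^ (n + 1) * (fourier (-(n + 1) : ℤ) x : ℂ)
      = ((starRingEnd ℂ) z * w) ^ n + ((z * w⁻¹) ^ n) * (z * w⁻¹) := by
    intro n
    have f1 : (fourier ((n : ℕ) : ℤ) x : ℂ) = w ^ (n : ℕ) := by
      rw [fourier_zpow, ← hw, zpow_natCast]
    have f2 : (fourier (-((n : ℤ) + 1)) x : ℂ) = (w ^ (n + 1 : ℕ))⁻¹ := by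
      rw [fourier_zpow, ← hw, zpow_neg, show ((n : ℤ) + 1) = ((n + 1 : ℕ) : ℤ) from by
        push_cast; ring, zpow_natCast]
    rw [f1, f2]
    ring
  simp only [hterm]
  rw [Summable.tsum_add (summable_geometric_of_norm_lt_one hc)
      ((summable_geometric_of_norm_lt_one hd).mul_right _),
    tsum_mul_right, tsum_geometric_of_norm_lt_one hc, tsum_geometric_of_norm_lt_one hd]
  have e1 : ((‖z‖ ^ 2 : ℝ) : ℂ) = z * (starRingEnd ℂ) z := by
    rw [Complex.mul_conj, Complex.normSq_eq_norm_sq]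
  have e2 : ((‖w - z‖ ^ 2 : ℝ) : ℂ)
      = (w - z) * ((starRingEnd ℂ) w - (starRingEnd ℂ) z) := by
    rw [← map_sub, Complex.mul_conj, Complex.normSq_eq_norm_sq]
  have hwz : w - z ≠ 0 := by
    intro h
    rw [sub_eq_zero] at h
    rw [h] at habs
    exact (ne_of_lt hz) habs
  have h1 : (1 : ℂ) - (starRingEnd ℂ) z * w ≠ 0 := by
    intro h
    rw [sub_eq_zero] at h
    have : ‖(starRingEnd ℂ) z * w‖ = 1 := by rw [← h]; simp
    rw [norm_mul, RCLike.norm_conj, habs, mul_one] at this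
    exact (ne_of_lt hz) this
  have h2 : (1 : ℂ) - z * w⁻¹ ≠ 0 := by
    intro h
    rw [sub_eq_zero] at h
    have : ‖z * w⁻¹‖ = 1 := by rw [← h]; simp
    rw [norm_mul, norm_inv, habs, inv_one, mul_one] at this
    exact (ne_of_lt hz) this
  have d1 : w⁻¹ - (starRingEnd ℂ) z = ((1 : ℂ) - (starRingEnd ℂ) z * w) * w⁻¹ := by
    rw [sub_mul, one_mul, mul_inv_cancel_right₀ hwne]
  have d2 : (1 : ℂ) - z * w⁻¹ = (w - z) * w⁻¹ := by
    rw [sub_mul, mul_inv_cancel₀ hwne]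
  have h3 : w⁻¹ - (starRingEnd ℂ) z ≠ 0 := by
    rw [d1]
    exact mul_ne_zero h1 (inv_ne_zero hwne)
  rw [Complex.ofReal_div, Complex.ofReal_sub, Complex.ofReal_one, e1, e2, hcw, d1, d2]
  field_simp
  ring

section FiniteMeasure

variable (ν : Measure (AddCircle (1:ℝ))) [IsFiniteMeasure ν]

lemma integrable_fourier (n : ℤ) : Integrable (fun x => (fourier n x : ℂ)) ν :=
  (fourier n).continuous.integrable_of_hasCompactSupport
    (HasCompactSupport.of_compactSpace _)

lemma norm_integral_fourier_le (n : ℤ) :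
    ‖∫ x, (fourier n x : ℂ) ∂ν‖ ≤ (ν Set.univ).toReal := by
  have := norm_integral_le_of_norm_le_const (μ := ν) (C := 1)
    (f := fun x => (fourier n x : ℂ))
    (Filter.Eventually.of_forall fun x => by
      rw [abs_fourier])
  simpa [measureReal_def] using this

lemma integral_kernel (z : ℂ) (hz : ‖z‖ < 1) :
    ∫ x, (((1 - ‖z‖ ^ 2) / ‖(fourier 1 x : ℂ) - z‖ ^ 2 : ℝ) : ℂ) ∂ν
      = ∑' n : ℕ, ((starRingEnd ℂ) z ^ n * ∫ x, (fourier (n : ℤ) x : ℂ) ∂ν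
          + z ^ (n + 1) * ∫ x, (fourier (-(n + 1) : ℤ) x : ℂ) ∂ν) := by
  have hz' : ‖z‖ < 1 := by exact hz
  have hmeas : ∀ n : ℕ, AEStronglyMeasurable (fun x : AddCircle (1:ℝ) =>
      (starRingEnd ℂ) z ^ n * (fourier (n : ℤ) x : ℂ)
        + z ^ (n + 1) * (fourier (-(n + 1) : ℤ) x : ℂ)) ν := by
    intro n
    exact ((continuous_const.mul (fourier _).continuous).add
      (continuous_const.mul (fourier _).continuous)).aestronglyMeasurable
  have hnorm : ∀ (n : ℕ) (x : AddCircle (1:ℝ)),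
      ‖(starRingEnd ℂ) z ^ n * (fourier (n : ℤ) x : ℂ)
        + z ^ (n + 1) * (fourier (-(n + 1) : ℤ) x : ℂ)‖ ≤ 2 * ‖z‖ ^ n := by
    intro n x
    have e1 : ‖(starRingEnd ℂ) z ^ n * (fourier (n : ℤ) x : ℂ)‖ = ‖z‖ ^ n := by
      rw [norm_mul, norm_pow, RCLike.norm_conj,
        abs_fourier, mul_one]
    have e2 : ‖z ^ (n + 1) * (fourier (-(n + 1) : ℤ) x : ℂ)‖ = ‖z‖ ^ (n + 1) := by
      rw [norm_mul, norm_pow, abs_fourier, mul_one]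
    have hle : ‖z‖ ^ (n + 1) ≤ ‖z‖ ^ n :=
      pow_le_pow_of_le_one (norm_nonneg z) hz'.le (Nat.le_succ n)
    calc ‖_ + _‖ ≤ ‖(starRingEnd ℂ) z ^ n * (fourier (n : ℤ) x : ℂ)‖
          + ‖z ^ (n + 1) * (fourier (-(n + 1) : ℤ) x : ℂ)‖ := norm_add_le _ _
      _ ≤ 2 * ‖z‖ ^ n := by rw [e1, e2]; linarith
  have hbound : ∑' n : ℕ, ∫⁻ x, ‖(starRingEnd ℂ) z ^ n * (fourier (n : ℤ) x : ℂ)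
      + z ^ (n + 1) * (fourier (-(n + 1) : ℤ) x : ℂ)‖₊ ∂ν ≠ ⊤ := by
    have key : ∀ n : ℕ, ∫⁻ x, ‖(starRingEnd ℂ) z ^ n * (fourier (n : ℤ) x : ℂ)
        + z ^ (n + 1) * (fourier (-(n + 1) : ℤ) x : ℂ)‖₊ ∂ν
        ≤ 2 * (‖z‖₊ : ℝ≥0∞) ^ n * ν Set.univ := by
      intro n
      have hpt : ∀ x : AddCircle (1:ℝ), (‖(starRingEnd ℂ) z ^ n * (fourier (n : ℤ) x : ℂ)
          + z ^ (n + 1) * (fourier (-(n + 1) : ℤ) x : ℂ)‖₊ : ℝ≥0∞)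
          ≤ 2 * (‖z‖₊ : ℝ≥0∞) ^ n := by
        intro x
        have h := ENNReal.ofReal_le_ofReal (hnorm n x)
        rw [ofReal_norm_eq_enorm, enorm_eq_nnnorm] at h
        refine h.trans ?_
        rw [ENNReal.ofReal_mul (by norm_num : (0:ℝ) ≤ 2),
          ENNReal.ofReal_pow (norm_nonneg z), ofReal_norm_eq_enorm, enorm_eq_nnnorm]
        norm_num
      refine (lintegral_mono hpt).trans ?_
      exact (lintegral_const _).le
    have hsum : ∑' n : ℕ, (2 * (‖z‖₊ : ℝ≥0∞) ^ n * ν Set.univ)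
        = 2 * (1 - (‖z‖₊ : ℝ≥0∞))⁻¹ * ν Set.univ := by
      rw [ENNReal.tsum_mul_right, ENNReal.tsum_mul_left, ENNReal.tsum_geometric]
    have hfin : 2 * (1 - (‖z‖₊ : ℝ≥0∞))⁻¹ * ν Set.univ < ⊤ := by
      apply ENNReal.mul_lt_top _ (measure_lt_top ν _)
      apply ENNReal.mul_lt_top (by norm_num)
      rw [lt_top_iff_ne_top, Ne, ENNReal.inv_eq_top, tsub_eq_zero_iff_le]
      intro hcon
      have : (‖z‖₊ : ℝ≥0∞) < 1 := by
        rw [← ENNReal.coe_one, ENNReal.coe_lt_coe]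
        rw [← NNReal.coe_lt_coe]
        simpa using hz'
      exact absurd hcon (not_le.mpr this)
    refine ne_of_lt (lt_of_le_of_lt (ENNReal.tsum_le_tsum key) ?_)
    rw [hsum]
    exact hfin
  calc ∫ x, (((1 - ‖z‖ ^ 2) / ‖(fourier 1 x : ℂ) - z‖ ^ 2 : ℝ) : ℂ) ∂ν
      = ∫ x, ∑' n : ℕ, ((starRingEnd ℂ) z ^ n * (fourier (n : ℤ) x : ℂ)
          + z ^ (n + 1) * (fourier (-(n + 1) : ℤ) x : ℂ)) ∂ν :=
        integral_congr_ae (Filter.Eventually.of_forall fun x => kernel_eq z hz x)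
    _ = ∑' n : ℕ, ∫ x, ((starRingEnd ℂ) z ^ n * (fourier (n : ℤ) x : ℂ)
          + z ^ (n + 1) * (fourier (-(n + 1) : ℤ) x : ℂ)) ∂ν :=
        integral_tsum hmeas hbound
    _ = ∑' n : ℕ, ((starRingEnd ℂ) z ^ n * ∫ x, (fourier (n : ℤ) x : ℂ) ∂ν
          + z ^ (n + 1) * ∫ x, (fourier (-(n + 1) : ℤ) x : ℂ) ∂ν) := by
        refine tsum_congr fun n => ?_
        rw [integral_add ((integrable_fourier ν _).const_mul _)
          ((integrable_fourier ν _).const_mul _), integral_const_mul, integral_const_mul]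

lemma summable_aux (z : ℂ) (hz : ‖z‖ < 1) :
    Summable (fun n : ℕ => (starRingEnd ℂ) z ^ n * ∫ x, (fourier (n : ℤ) x : ℂ) ∂ν
      + z ^ (n + 1) * ∫ x, (fourier (-(n + 1) : ℤ) x : ℂ) ∂ν) := by
  have hz' : ‖z‖ < 1 := by exact hz
  refine Summable.of_norm_bounded
    ((summable_geometric_of_lt_one (norm_nonneg z) hz').mul_left (2 * (ν Set.univ).toReal)) fun n => ?_
  have b1 := norm_integral_fourier_le ν (n : ℤ)
  have b2 := norm_integral_fourier_le ν (-(n + 1) : ℤ)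
  have hle : ‖z‖ ^ (n + 1) ≤ ‖z‖ ^ n :=
    pow_le_pow_of_le_one (norm_nonneg z) hz'.le (Nat.le_succ n)
  have h0 : (0:ℝ) ≤ (ν Set.univ).toReal := ENNReal.toReal_nonneg
  calc ‖_ + _‖ ≤ ‖(starRingEnd ℂ) z ^ n * ∫ x, (fourier (n : ℤ) x : ℂ) ∂ν‖
        + ‖z ^ (n + 1) * ∫ x, (fourier (-(n + 1) : ℤ) x : ℂ) ∂ν‖ := norm_add_le _ _
    _ ≤ ‖z‖ ^ n * (ν Set.univ).toReal + ‖z‖ ^ (n + 1) * (ν Set.univ).toReal := by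
        rw [norm_mul, norm_mul, norm_pow, norm_pow, RCLike.norm_conj]
        have hp : (0:ℝ) ≤ ‖z‖ ^ n := pow_nonneg (norm_nonneg z) n
        have hp' : (0:ℝ) ≤ ‖z‖ ^ (n+1) := pow_nonneg (norm_nonneg z) (n+1)
        exact add_le_add (mul_le_mul_of_nonneg_left b1 hp) (mul_le_mul_of_nonneg_left b2 hp')
    _ ≤ 2 * (ν Set.univ).toReal * ‖z‖ ^ n := by nlinarith [pow_nonneg (norm_nonneg z) n]

end FiniteMeasure

/-- The `n`-th "Fourier coefficient" of a complex measure. -/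
noncomputable def coeffA (μ : MeasureTheory.ComplexMeasure (AddCircle (1:ℝ))) (n : ℤ) : ℂ :=
  cmIntegral μ (fun x => (fourier n x : ℂ))

lemma rep (μ : MeasureTheory.ComplexMeasure (AddCircle (1:ℝ))) (z : ℂ)
    (hz : ‖z‖ < 1) :
    poissonExt μ z = ∑' n : ℕ, ((starRingEnd ℂ) z ^ n * coeffA μ (n : ℤ)
      + z ^ (n + 1) * coeffA μ (-(n + 1) : ℤ)) := by
  unfold poissonExt coeffA
  unfold cmIntegral
  rw [integral_kernel _ z hz, integral_kernel _ z hz, integral_kernel _ z hz,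
    integral_kernel _ z hz,
    ← Summable.tsum_sub (summable_aux _ z hz) (summable_aux _ z hz),
    ← Summable.tsum_sub (summable_aux _ z hz) (summable_aux _ z hz),
    ← tsum_mul_left,
    ← Summable.tsum_add (((summable_aux _ z hz).sub (summable_aux _ z hz)))
      ((((summable_aux _ z hz).sub (summable_aux _ z hz))).mul_left _)]
  refine tsum_congr fun n => ?_
  ring

lemma coeffA_bound (μ : MeasureTheory.ComplexMeasure (AddCircle (1:ℝ))) :
    ∃ C : ℝ, 0 ≤ C ∧ ∀ n : ℤ, ‖coeffA μ n‖ ≤ C := by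
  refine ⟨(μ.re.toJordanDecomposition.posPart Set.univ).toReal
    + (μ.re.toJordanDecomposition.negPart Set.univ).toReal
    + (μ.im.toJordanDecomposition.posPart Set.univ).toReal
    + (μ.im.toJordanDecomposition.negPart Set.univ).toReal, by positivity, fun n => ?_⟩
  unfold coeffA cmIntegral
  have b1 := norm_integral_fourier_le μ.re.toJordanDecomposition.posPart n
  have b2 := norm_integral_fourier_le μ.re.toJordanDecomposition.negPart n
  have b3 := norm_integral_fourier_le μ.im.toJordanDecomposition.posPart n
  have b4 := norm_integral_fourier_le μ.im.toJordanDecomposition.negPart n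
  calc ‖_‖ ≤ ‖(∫ x, (fourier n x : ℂ) ∂μ.re.toJordanDecomposition.posPart)
        - ∫ x, (fourier n x : ℂ) ∂μ.re.toJordanDecomposition.negPart‖
      + ‖Complex.I * ((∫ x, (fourier n x : ℂ) ∂μ.im.toJordanDecomposition.posPart)
        - ∫ x, (fourier n x : ℂ) ∂μ.im.toJordanDecomposition.negPart)‖ := norm_add_le _ _
    _ ≤ _ := by
      rw [norm_mul, Complex.norm_I, one_mul]
      have t1 := norm_sub_le (∫ x, (fourier n x : ℂ) ∂μ.re.toJordanDecomposition.posPart)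
        (∫ x, (fourier n x : ℂ) ∂μ.re.toJordanDecomposition.negPart)
      have t2 := norm_sub_le (∫ x, (fourier n x : ℂ) ∂μ.im.toJordanDecomposition.posPart)
        (∫ x, (fourier n x : ℂ) ∂μ.im.toJordanDecomposition.negPart)
      linarith

lemma rep' (μ : MeasureTheory.ComplexMeasure (AddCircle (1:ℝ)))
    (hμ : ∀ k : ℤ, k < 0 → cmIntegral μ (fun x => (fourier (-k) x : ℂ)) = 0)
    (z : ℂ) (hz : ‖z‖ < 1) :
    poissonExt μ z = ∑' n : ℕ, ((if n = 0 then coeffA μ 0 else 0)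
      + z ^ (n + 1) * coeffA μ (-(n + 1) : ℤ)) := by
  rw [rep μ z hz]
  refine tsum_congr fun n => ?_
  congr 1
  by_cases h : n = 0
  · subst h; simp
  · rw [if_neg h]
    have hn : (0:ℤ) < (n:ℤ) := by exact_mod_cast Nat.pos_of_ne_zero h
    have h0 := hμ (-(n:ℤ)) (by linarith)
    rw [neg_neg] at h0
    have : coeffA μ (n : ℤ) = 0 := h0
    rw [this, mul_zero]

end PoissonProof

open PoissonProof Filter in
/-- If the Fourier coefficients of a finite complex Borel measure on the circle
vanish for all `k < 0`, then its Poisson extension is analytic in the unit disc. -/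
theorem poissonExt_analytic (μ : MeasureTheory.ComplexMeasure (AddCircle (1 : ℝ)))
    (hμ : ∀ k : ℤ, k < 0 → cmIntegral μ (fun x => (fourier (-k) x : ℂ)) = 0) :
    DifferentiableOn ℂ (poissonExt μ) (ball (0 : ℂ) 1) := by
  classical
  obtain ⟨C, hC0, hC⟩ := coeffA_bound μ
  set f : ℕ → ℂ → ℂ := fun n z => (if n = 0 then coeffA μ 0 else 0)
    + z ^ (n + 1) * coeffA μ (-(n + 1) : ℤ) with hf
  have heq : Set.EqOn (poissonExt μ) (fun z => ∑' n : ℕ, f n z) (ball (0:ℂ) 1) := by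
    intro z hz
    rw [mem_ball_zero_iff] at hz
    exact rep' μ hμ z hz
  refine DifferentiableOn.congr ?_ heq
  refine TendstoLocallyUniformlyOn.differentiableOn
    (F := fun (t : Finset ℕ) (z : ℂ) => ∑ n ∈ t, f n z) (φ := atTop) ?_ ?_ isOpen_ball
  · rw [tendstoLocallyUniformlyOn_iff_forall_isCompact isOpen_ball]
    intro K hK hKc
    rcases K.eq_empty_or_nonempty with rfl | hne
    · exact tendstoUniformlyOn_empty
    obtain ⟨x₀, hx₀K, hx₀⟩ := hKc.exists_isMaxOn hne continuous_norm.continuousOn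
    set r : ℝ := ‖x₀‖ with hr
    have hr1 : r < 1 := by
      have := hK hx₀K
      rwa [mem_ball_zero_iff] at this
    have hr0 : 0 ≤ r := norm_nonneg _
    refine tendstoUniformlyOn_tsum (f := f) (u := fun n => 2 * C * r ^ n)
      ((summable_geometric_of_lt_one hr0 hr1).mul_left _) fun n z hzK => ?_
    have hzr : ‖z‖ ≤ r := hx₀ hzK
    have hb1 : ‖(if n = 0 then coeffA μ 0 else 0 : ℂ)‖ ≤ if n = 0 then C else 0 := by
      by_cases h : n = 0
      · simpa [h] using hC 0
      · simp [h]
    have hb2 : ‖z ^ (n + 1) * coeffA μ (-(n + 1) : ℤ)‖ ≤ r ^ (n + 1) * C := by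
      rw [norm_mul, norm_pow]
      exact mul_le_mul (pow_le_pow_left₀ (norm_nonneg z) hzr _) (hC _)
        (norm_nonneg _) (pow_nonneg hr0 _)
    have hpow : r ^ (n + 1) ≤ r ^ n := pow_le_pow_of_le_one hr0 hr1.le (Nat.le_succ n)
    have hrn : 0 ≤ r ^ n := pow_nonneg hr0 n
    calc ‖f n z‖ ≤ ‖(if n = 0 then coeffA μ 0 else 0 : ℂ)‖
          + ‖z ^ (n + 1) * coeffA μ (-(n + 1) : ℤ)‖ := norm_add_le _ _
      _ ≤ (if n = 0 then C else 0) + r ^ (n + 1) * C := add_le_add hb1 hb2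
      _ ≤ 2 * C * r ^ n := by
          by_cases h : n = 0
          · subst h
            have hif : (if 0 = 0 then C else 0) = C := if_pos rfl
            rw [hif, pow_one, pow_zero, mul_one]
            nlinarith
          · rw [if_neg h]
            nlinarith [mul_le_mul_of_nonneg_right hpow hC0]
  · refine Filter.Eventually.of_forall fun t => ?_
    refine Differentiable.differentiableOn ?_
    refine Differentiable.fun_sum fun n _ => ?_
    exact (differentiable_const _).add ((differentiable_pow (n+1)).mul (differentiable_const _))
end

section
/- The best constant C in the inequality ‖f_r − f_ρ‖₁ ≤ C √(‖f_ρ‖₁² − ‖f_r‖₁²) for f analytic in the unit disc and 0 ≤ r ≤ ρ < 1 satisfies C ≥ √2. Concretely: for f_ε(z) = 1 + εz, r = 0 and any fixed ρ ∈ (0,1), one has lim_{ε→0⁺} ‖(f_ε)_ρ − (f_ε)_0‖₁ / √(‖(f_ε)_ρ‖₁² − ‖(f_ε)_0‖₁²) = √2. -/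
open MeasureTheory Real Complex Filter

noncomputable def Fr (a θ : ℝ) : ℝ :=
  Real.sqrt ((1 + a * Real.cos θ) ^ 2 + (a * Real.sin θ) ^ 2)

noncomputable def Qr (a θ : ℝ) : ℝ :=
  Real.sin θ ^ 2 / (Fr a θ + (1 + a * Real.cos θ))

lemma Fr_cont (a : ℝ) : Continuous (Fr a) := by
  unfold Fr; fun_prop

lemma Fr_nonneg (a θ : ℝ) : 0 ≤ Fr a θ := Real.sqrt_nonneg _

lemma Fr_ge (a θ : ℝ) : 1 + a * Real.cos θ ≤ Fr a θ := by
  have h : |1 + a * Real.cos θ| ≤ Fr a θ := by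
    rw [Fr, ← Real.sqrt_sq_eq_abs]
    exact Real.sqrt_le_sqrt (by nlinarith [sq_nonneg (a * Real.sin θ)])
  exact (le_abs_self _).trans h

lemma x_pos {a : ℝ} (θ : ℝ) (ha0 : 0 < a) (ha : a ≤ 1/2) : 1/2 ≤ 1 + a * Real.cos θ := by
  nlinarith [Real.neg_one_le_cos θ]

lemma abs_formula (a θ : ℝ) :
    ‖1 + (a : ℂ) * Complex.exp (θ * Complex.I)‖ = Fr a θ := by
  rw [Complex.exp_mul_I, Complex.norm_def, Complex.normSq_apply, Fr]
  simp [Complex.cos_ofReal_re, Complex.sin_ofReal_re]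
  ring_nf

lemma Fr_sq (a θ : ℝ) : Fr a θ ^ 2 = (1 + a * Real.cos θ) ^ 2 + (a * Real.sin θ) ^ 2 :=
  Real.sq_sqrt (by positivity)

lemma Fr_sub {a : ℝ} (θ : ℝ) (ha0 : 0 < a) (ha : a ≤ 1/2) :
    Fr a θ - (1 + a * Real.cos θ) = a ^ 2 * Qr a θ := by
  have hx := x_pos θ ha0 ha
  have hD : 0 < Fr a θ + (1 + a * Real.cos θ) := by
    have := Fr_nonneg a θ; linarith
  rw [Qr]
  field_simp
  nlinarith [Fr_sq a θ]

lemma Qr_nonneg {a : ℝ} (θ : ℝ) (ha0 : 0 < a) (ha : a ≤ 1/2) : 0 ≤ Qr a θ := by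
  have hx := x_pos θ ha0 ha
  have hD : 0 < Fr a θ + (1 + a * Real.cos θ) := by
    have := Fr_nonneg a θ; linarith
  exact div_nonneg (sq_nonneg _) hD.le

lemma Qr_le_one {a : ℝ} (θ : ℝ) (ha0 : 0 < a) (ha : a ≤ 1/2) : Qr a θ ≤ 1 := by
  have hx := x_pos θ ha0 ha
  have hD : 1 ≤ Fr a θ + (1 + a * Real.cos θ) := by
    have := Fr_ge a θ; linarith
  calc Qr a θ ≤ Real.sin θ ^ 2 := div_le_self (sq_nonneg _) hD
  _ ≤ 1 := Real.sin_sq_le_one θ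

lemma Qr_cont {a : ℝ} (ha0 : 0 < a) (ha : a ≤ 1/2) : Continuous (Qr a) := by
  apply Continuous.div (by fun_prop) (by have := Fr_cont a; fun_prop)
  intro θ
  have hx := x_pos θ ha0 ha
  have := Fr_nonneg a θ
  positivity

lemma Qr_tendsto (θ : ℝ) :
    Tendsto (fun a => Qr a θ) (nhdsWithin 0 (Set.Ioi 0)) (nhds (Real.sin θ ^ 2 / 2)) := by
  have hden : Tendsto (fun a : ℝ => Fr a θ + (1 + a * Real.cos θ)) (nhds 0) (nhds 2) := by
    have hc : Continuous (fun a : ℝ => Fr a θ + (1 + a * Real.cos θ)) := by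
      unfold Fr; fun_prop
    convert hc.tendsto 0 using 2
    norm_num [Fr]
  have : Tendsto (fun a : ℝ => Qr a θ) (nhds 0) (nhds (Real.sin θ ^ 2 / 2)) :=
    (tendsto_const_nhds.div hden two_ne_zero)
  exact this.mono_left nhdsWithin_le_nhds

lemma intQ_tendsto :
    Tendsto (fun a => ∫ θ in (0:ℝ)..(2*π), Qr a θ) (nhdsWithin 0 (Set.Ioi 0))
      (nhds (π/2)) := by
  have hmem : Set.Ioc (0:ℝ) (1/2) ∈ nhdsWithin (0:ℝ) (Set.Ioi 0) :=
    Ioc_mem_nhdsGT (by norm_num)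
  have key := intervalIntegral.tendsto_integral_filter_of_dominated_convergence
    (μ := volume) (a := 0) (b := 2*π) (F := fun a θ => Qr a θ)
    (f := fun θ => Real.sin θ ^ 2 / 2) (bound := fun _ => 1)
    (by filter_upwards [hmem] with a ha
        exact ((Qr_cont ha.1 ha.2).aestronglyMeasurable))
    (by filter_upwards [hmem] with a ha
        refine ae_of_all _ fun θ _ => ?_
        rw [Real.norm_eq_abs, _root_.abs_of_nonneg (Qr_nonneg θ ha.1 ha.2)]
        exact Qr_le_one θ ha.1 ha.2)
    intervalIntegrable_const
    (ae_of_all _ fun θ _ => Qr_tendsto θ)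
  have hval : (∫ θ in (0:ℝ)..(2*π), Real.sin θ ^ 2 / 2) = π/2 := by
    rw [intervalIntegral.integral_div, integral_sin_sq]
    simp [Real.sin_two_pi]
  rwa [hval] at key

noncomputable def gg (a : ℝ) : ℝ := (2*π)⁻¹ * ∫ θ in (0:ℝ)..(2*π), Fr a θ

lemma gg_sub {a : ℝ} (ha0 : 0 < a) (ha : a ≤ 1/2) :
    gg a - 1 = (2*π)⁻¹ * (a^2 * ∫ θ in (0:ℝ)..(2*π), Qr a θ) := by
  have key : ∀ θ, Fr a θ = (1 + a * Real.cos θ) + a^2 * Qr a θ := fun θ => by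
    linarith [Fr_sub θ ha0 ha]
  have h1 : (∫ θ in (0:ℝ)..(2*π), Fr a θ)
      = ∫ θ in (0:ℝ)..(2*π), ((1 + a * Real.cos θ) + a^2 * Qr a θ) :=
    intervalIntegral.integral_congr fun θ _ => key θ
  have hi1 : IntervalIntegrable (fun θ => 1 + a * Real.cos θ) volume 0 (2*π) :=
    (by fun_prop : Continuous fun θ => 1 + a * Real.cos θ).intervalIntegrable _ _
  have hi2 : IntervalIntegrable (fun θ => a^2 * Qr a θ) volume 0 (2*π) :=
    (continuous_const.mul (Qr_cont ha0 ha)).intervalIntegrable _ _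
  rw [gg, h1, intervalIntegral.integral_add hi1 hi2,
    intervalIntegral.integral_const_mul]
  have h2 : (∫ θ in (0:ℝ)..(2*π), (1 + a * Real.cos θ)) = 2*π := by
    have hia : IntervalIntegrable (fun _ : ℝ => (1:ℝ)) volume 0 (2*π) :=
      intervalIntegrable_const
    have hib : IntervalIntegrable (fun θ => a * Real.cos θ) volume 0 (2*π) :=
      (by fun_prop : Continuous fun θ => a * Real.cos θ).intervalIntegrable _ _
    rw [intervalIntegral.integral_add hia hib, intervalIntegral.integral_const_mul,
      integral_cos]
    simp [Real.sin_two_pi]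
  rw [h2]
  have hπ : (2*π) ≠ 0 := by positivity
  field_simp
  ring

lemma phi_tendsto :
    Tendsto (fun a => (gg a - 1) / a^2) (nhdsWithin 0 (Set.Ioi 0)) (nhds (1/4)) := by
  have h : Tendsto (fun a => (2*π)⁻¹ * ∫ θ in (0:ℝ)..(2*π), Qr a θ)
      (nhdsWithin 0 (Set.Ioi 0)) (nhds ((2*π)⁻¹ * (π/2))) :=
    tendsto_const_nhds.mul intQ_tendsto
  have hval : (2*π)⁻¹ * (π/2) = 1/4 := by
    field_simp
    ring
  rw [hval] at h
  refine h.congr' ?_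
  filter_upwards [Ioc_mem_nhdsGT (by norm_num : (0:ℝ) < 1/2)] with a ha
  rw [gg_sub ha.1 ha.2]
  have ha2 : a^2 ≠ 0 := pow_ne_zero _ (ne_of_gt ha.1)
  have ha1 : a ≠ 0 := ne_of_gt ha.1
  field_simp

lemma gg_tendsto : Tendsto gg (nhdsWithin 0 (Set.Ioi 0)) (nhds 1) := by
  have hsq : Tendsto (fun a : ℝ => a^2) (nhdsWithin 0 (Set.Ioi 0)) (nhds 0) := by
    have : Tendsto (fun a : ℝ => a^2) (nhds 0) (nhds 0) := by
      simpa using (continuous_pow 2).tendsto (0:ℝ)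
    exact this.mono_left nhdsWithin_le_nhds
  have h := phi_tendsto.mul hsq
  rw [mul_zero] at h
  have h2 : Tendsto (fun a => gg a - 1) (nhdsWithin 0 (Set.Ioi 0)) (nhds 0) := by
    refine h.congr' ?_
    filter_upwards [self_mem_nhdsWithin] with a (ha : 0 < a)
    field_simp
  have h3 := h2.add_const 1
  simp only [sub_add_cancel, zero_add] at h3
  exact h3

lemma mainR :
    Tendsto (fun a : ℝ => a / Real.sqrt (gg a ^ 2 - 1)) (nhdsWithin 0 (Set.Ioi 0))
      (nhds (Real.sqrt 2)) := by
  have hX : Tendsto (fun a => ((gg a - 1) / a^2) * (gg a + 1))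
      (nhdsWithin 0 (Set.Ioi 0)) (nhds ((1/4) * (1+1))) :=
    phi_tendsto.mul (gg_tendsto.add_const 1)
  have hval : (1/4 : ℝ) * (1+1) = 1/2 := by norm_num
  rw [hval] at hX
  have hfin : Tendsto (fun a => 1 / Real.sqrt (((gg a - 1) / a^2) * (gg a + 1)))
      (nhdsWithin 0 (Set.Ioi 0)) (nhds (1 / Real.sqrt (1/2))) := by
    refine tendsto_const_nhds.div ((Real.continuous_sqrt.tendsto _).comp hX) ?_
    positivity
  have hval2 : (1:ℝ) / Real.sqrt (1/2) = Real.sqrt 2 := by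
    rw [show (1/2:ℝ) = 2⁻¹ by norm_num, Real.sqrt_inv, one_div, inv_inv]
  rw [hval2] at hfin
  -- eventual positivity of X
  have hXpos : ∀ᶠ a in nhdsWithin (0:ℝ) (Set.Ioi 0),
      0 < ((gg a - 1) / a^2) * (gg a + 1) :=
    hX.eventually (eventually_gt_nhds (by norm_num))
  refine hfin.congr' ?_
  filter_upwards [hXpos, self_mem_nhdsWithin] with a hXa (ha : 0 < a)
  set X := ((gg a - 1) / a^2) * (gg a + 1) with hXdef
  have hsq : gg a ^ 2 - 1 = X * a^2 := by
    rw [hXdef]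
    field_simp
    ring
  rw [hsq, Real.sqrt_mul hXa.le, Real.sqrt_sq ha.le]
  have hs : Real.sqrt X ≠ 0 := ne_of_gt (Real.sqrt_pos.mpr hXa)
  field_simp

/-- The best constant `C` in `‖f_r − f_ρ‖₁ ≤ C √(‖f_ρ‖₁² − ‖f_r‖₁²)` is at least
`√2`: for `f_ε(z) = 1 + εz`, `r = 0` and fixed `ρ ∈ (0,1)`, the quotient
`‖(f_ε)_ρ − (f_ε)_0‖₁ / √(‖(f_ε)_ρ‖₁² − ‖(f_ε)_0‖₁²)` tends to `√2` as `ε → 0⁺`. -/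
theorem best_constant_lower_bound (ρ : ℝ) (hρ0 : 0 < ρ) (hρ1 : ρ < 1) :
    Tendsto (fun ε : ℝ =>
        ((2 * π)⁻¹ * ∫ θ in (0 : ℝ)..(2 * π),
            ‖(1 + ε * ρ * Complex.exp (θ * Complex.I)) - 1‖)
          / Real.sqrt (((2 * π)⁻¹ * ∫ θ in (0 : ℝ)..(2 * π),
              ‖1 + ε * ρ * Complex.exp (θ * Complex.I)‖) ^ 2 - 1 ^ 2))
      (nhdsWithin 0 (Set.Ioi 0)) (nhds (Real.sqrt 2)) := by
  have hmap : Tendsto (fun ε : ℝ => ε * ρ) (nhdsWithin 0 (Set.Ioi 0))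
      (nhdsWithin 0 (Set.Ioi 0)) := by
    refine tendsto_nhdsWithin_of_tendsto_nhds_of_eventually_within _ ?_ ?_
    · have : Tendsto (fun ε : ℝ => ε * ρ) (nhds 0) (nhds (0 * ρ)) :=
        (continuous_id.mul continuous_const).tendsto 0
      rw [zero_mul] at this
      exact this.mono_left nhdsWithin_le_nhds
    · filter_upwards [self_mem_nhdsWithin] with ε (hε : 0 < ε)
      exact mul_pos hε hρ0
  have hcomp := mainR.comp hmap
  refine hcomp.congr' ?_
  filter_upwards [self_mem_nhdsWithin] with ε (hε : 0 < ε)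
  have hnum : ∀ θ : ℝ,
      ‖(1 + (ε:ℂ) * ρ * Complex.exp (θ * Complex.I)) - 1‖ = ε * ρ := by
    intro θ
    rw [add_sub_cancel_left, norm_mul, norm_mul, Complex.norm_exp_ofReal_mul_I,
      Complex.norm_real, Complex.norm_real, Real.norm_eq_abs, Real.norm_eq_abs, abs_of_pos hε, abs_of_pos hρ0, mul_one]
  have hden : ∀ θ : ℝ,
      ‖1 + (ε:ℂ) * ρ * Complex.exp (θ * Complex.I)‖ = Fr (ε * ρ) θ := by
    intro θ
    rw [← abs_formula]
    push_cast
    ring_nf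
  have hI1 : (∫ θ in (0:ℝ)..(2*π),
      ‖(1 + (ε:ℂ) * ρ * Complex.exp (θ * Complex.I)) - 1‖) = 2*π*(ε*ρ) := by
    rw [intervalIntegral.integral_congr (fun θ _ => hnum θ),
      intervalIntegral.integral_const]
    rw [smul_eq_mul]
    ring
  have hI2 : (∫ θ in (0:ℝ)..(2*π),
      ‖1 + (ε:ℂ) * ρ * Complex.exp (θ * Complex.I)‖)
      = ∫ θ in (0:ℝ)..(2*π), Fr (ε*ρ) θ :=
    intervalIntegral.integral_congr (fun θ _ => hden θ)
  show (ε * ρ) / Real.sqrt (gg (ε * ρ) ^ 2 - 1) = _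
  rw [hI1, hI2]
  have hπ : (2*π : ℝ) ≠ 0 := by positivity
  rw [show (2*π)⁻¹ * (2*π*(ε*ρ)) = ε * ρ by field_simp]
  rw [one_pow]
  rfl
end

section
/- Let f be holomorphic on the open unit disc, 0 < ρ < 1, and suppose f has no zeros on the circle |z| = ρ. Then there exist functions g, h holomorphic on {|z| < ρ + ε} for some ε > 0 such that f = g·h on that region and |g(z)|² = |h(z)|² = |f(z)| for all |z| = ρ. -/
open Complex Metric

lemma exists_primitive_on_ball {R : NNReal} (hR : 0 < R) (G : ℂ → ℂ)
    (hG : DifferentiableOn ℂ G (ball (0 : ℂ) R)) :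
    ∃ H : ℂ → ℂ, ∀ z ∈ ball (0 : ℂ) R, HasDerivAt H (G z) z := by
  set Rh : NNReal := R / 2 with hRh
  have hRh0 : 0 < Rh := by positivity
  have hRhR : (Rh : ℝ) < R := by
    have : (0:ℝ) < R := hR
    rw [hRh]; push_cast; linarith
  have hsmall : ∀ r : NNReal, 0 < r → (r : ℝ) < R →
      HasFPowerSeriesOnBall G (cauchyPowerSeries G 0 r) 0 r := fun r hr0 hrR =>
    (hG.mono (closedBall_subset_ball hrR)).hasFPowerSeriesOnBall hr0
  set p := cauchyPowerSeries G 0 Rh with hp'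
  have hbase : HasFPowerSeriesOnBall G p 0 Rh := hsmall Rh hRh0 hRhR
  have hball : ∀ r : NNReal, 0 < r → (r : ℝ) < R → HasFPowerSeriesOnBall G p 0 r :=
    fun r hr0 hrR => hbase.exchange_radius (hsmall r hr0 hrR)
  set a : ℕ → ℂ := fun n => p.coeff n with ha
  refine ⟨fun z => ∑' n : ℕ, (a n / (n + 1)) * z ^ (n + 1), ?_⟩
  intro z hz
  have hzR : ‖z‖ < (R : ℝ) := by simpa [mem_ball, dist_eq_norm] using hz
  set s : ℝ := (‖z‖ + R) / 2 with hs
  have hzs : ‖z‖ < s := by rw [hs]; linarith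
  have hsR : s < (R : ℝ) := by rw [hs]; linarith [norm_nonneg z]
  have hs0 : 0 < s := lt_of_le_of_lt (norm_nonneg z) hzs
  set s' : NNReal := ⟨s, hs0.le⟩ with hs'
  set t : NNReal := ⟨(s + R)/2, by positivity⟩ with ht
  have hst : (s' : ℝ) < (t : ℝ) := by show s < (s + R) / 2; linarith
  have htR : (t : ℝ) < R := by show (s + R) / 2 < (R : ℝ); linarith
  have ht0 : 0 < t := by rw [ht]; exact_mod_cast (by positivity : (0:ℝ) < (s+R)/2)
  have hrad : (s' : ENNReal) < p.radius := by
    refine lt_of_lt_of_le ?_ (hball t ht0 htR).r_le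
    exact_mod_cast hst
  have hu : Summable fun n => ‖p n‖ * (s' : ℝ) ^ n := p.summable_norm_mul_pow hrad
  have key : HasDerivAt (fun y : ℂ => ∑' n : ℕ, (a n / (n + 1)) * y ^ (n + 1))
      (∑' n : ℕ, a n * z ^ n) z := by
    refine hasDerivAt_tsum_of_isPreconnected hu isOpen_ball
      (convex_ball (0:ℂ) s).isPreconnected
      (g := fun n y => (a n / (n + 1)) * y ^ (n + 1))
      (g' := fun n y => a n * y ^ n)
      (fun n y hy => ?_) (fun n y hy => ?_) (mem_ball_self hs0) ?_
      (mem_ball_zero_iff.mpr hzs)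
    · have h1 : HasDerivAt (fun y : ℂ => y ^ (n + 1)) ((n + 1 : ℕ) * y ^ n) y :=
        hasDerivAt_pow (n + 1) y
      have h2 := h1.const_mul (a n / (n + 1))
      refine h2.congr_deriv ?_
      have hne : ((n : ℂ) + 1) ≠ 0 := Nat.cast_add_one_ne_zero n
      push_cast
      field_simp
    · have hy' : ‖y‖ ≤ s := (mem_ball_zero_iff.mp hy).le
      calc ‖a n * y ^ n‖ = ‖a n‖ * ‖y‖ ^ n := by simp [norm_mul, norm_pow]
        _ ≤ ‖p n‖ * (s' : ℝ) ^ n := by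
            rw [p.norm_apply_eq_norm_coef]
            exact mul_le_mul_of_nonneg_left (pow_le_pow_left₀ (norm_nonneg y) hy' n)
              (norm_nonneg _)
    · exact (summable_zero).congr fun n => by simp
  have hsum : (∑' n : ℕ, a n * z ^ n) = G z := by
    set r₂ : NNReal := ⟨(‖z‖ + R)/2, by positivity⟩ with hr₂
    have hr₂0 : 0 < r₂ := by
      rw [hr₂]; exact_mod_cast (by positivity : (0:ℝ) < (‖z‖+R)/2)
    have hr₂R : (r₂ : ℝ) < R := by show (‖z‖ + R) / 2 < (R : ℝ); linarith
    have hz' : z ∈ Metric.eball (0 : ℂ) r₂ := by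
      rw [Metric.emetric_ball_nnreal]
      refine mem_ball_zero_iff.mpr ?_
      show ‖z‖ < (‖z‖ + R) / 2; linarith
    have hS := (hball r₂ hr₂0 hr₂R).hasSum hz'
    simp only [zero_add] at hS
    have h2 : ∀ n : ℕ, (p n fun _ => z) = a n * z ^ n := fun n => by
      rw [p.apply_eq_pow_smul_coeff, smul_eq_mul]; ring
    have hS' : HasSum (fun n => a n * z ^ n) (G z) :=
      (funext h2 : (fun n => p n fun _ => z) = fun n => a n * z ^ n) ▸ hS
    exact hS'.tsum_eq
  rw [← hsum]; exact key

lemma exists_log_on_ball {R : ℝ} (hR : 0 < R) (F : ℂ → ℂ)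
    (hF : DifferentiableOn ℂ F (ball (0 : ℂ) R))
    (hFne : ∀ z ∈ ball (0 : ℂ) R, F z ≠ 0) :
    ∃ L : ℂ → ℂ, DifferentiableOn ℂ L (ball (0 : ℂ) R) ∧
      ∀ z ∈ ball (0 : ℂ) R, Complex.exp (L z) = F z := by
  have hcoe : ((R.toNNReal : ℝ)) = R := Real.coe_toNNReal R hR.le
  have hR' : 0 < R.toNNReal := by exact_mod_cast hcoe ▸ hR
  have hFd : DifferentiableOn ℂ (deriv F) (ball (0 : ℂ) R) :=
    ((hF.analyticOnNhd isOpen_ball).deriv).differentiableOn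
  have hG : DifferentiableOn ℂ (fun z => deriv F z / F z) (ball (0 : ℂ) R) :=
    hFd.div hF hFne
  obtain ⟨H, hH⟩ := exists_primitive_on_ball hR' _ (by rwa [hcoe])
  rw [hcoe] at hH
  have hHd : DifferentiableOn ℂ H (ball (0 : ℂ) R) :=
    fun z hz => (hH z hz).differentiableAt.differentiableWithinAt
  set K : ℂ → ℂ := fun z => F z * Complex.exp (-H z) with hK'
  have hK0 : ∀ z ∈ ball (0 : ℂ) R, HasDerivAt K 0 z := by
    intro z hz
    have hFz : HasDerivAt F (deriv F z) z :=
      (hF.differentiableAt (isOpen_ball.mem_nhds hz)).hasDerivAt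
    have hexp : HasDerivAt (fun w => Complex.exp (-H w))
        (Complex.exp (-H z) * -(deriv F z / F z)) z := ((hH z hz).neg).cexp
    have hK := hFz.mul hexp
    refine hK.congr_deriv ?_
    field_simp [hFne z hz]
    ring
  have hKd : DifferentiableOn ℂ K (ball (0 : ℂ) R) :=
    fun z hz => (hK0 z hz).differentiableAt.differentiableWithinAt
  have hconst : ∀ z ∈ ball (0 : ℂ) R, K z = K 0 := by
    intro z hz
    refine (convex_ball (0:ℂ) R).is_const_of_fderivWithin_eq_zero hKd ?_ hz (mem_ball_self hR)
    intro x hx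
    rw [fderivWithin_of_isOpen isOpen_ball hx, (hK0 x hx).hasFDerivAt.fderiv]
    ext y
    simp
  have hc : K 0 ≠ 0 := mul_ne_zero (hFne 0 (mem_ball_self hR)) (Complex.exp_ne_zero _)
  refine ⟨fun z => H z + Complex.log (K 0), hHd.add_const _, fun z hz => ?_⟩
  rw [Complex.exp_add, Complex.exp_log hc, ← hconst z hz, hK']
  simp only []
  rw [mul_comm (F z), ← mul_assoc, ← Complex.exp_add]
  simp

lemma exists_sqrt_on_ball {R : ℝ} (hR : 0 < R) (F : ℂ → ℂ)
    (hF : DifferentiableOn ℂ F (ball (0 : ℂ) R))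
    (hFne : ∀ z ∈ ball (0 : ℂ) R, F z ≠ 0) :
    ∃ h : ℂ → ℂ, DifferentiableOn ℂ h (ball (0 : ℂ) R) ∧
      ∀ z ∈ ball (0 : ℂ) R, h z ^ 2 = F z := by
  obtain ⟨L, hLd, hL⟩ := exists_log_on_ball hR F hF hFne
  refine ⟨fun z => Complex.exp (L z / 2), (hLd.div_const 2).cexp, fun z hz => ?_⟩
  rw [pow_two, ← Complex.exp_add]
  rw [← hL z hz]
  ring_nf


lemma factor_zeros (r ρ : ℝ) (hρ : 0 < ρ) (hρr : ρ < r) :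
    ∀ (n : ℕ) (f : ℂ → ℂ) (Z : Finset ℂ), Z.card = n →
      DifferentiableOn ℂ f (ball (0 : ℂ) r) →
      (∀ z ∈ ball (0 : ℂ) r, (f z = 0 ↔ z ∈ Z)) →
      (∀ z ∈ Z, ‖z‖ < ρ) →
      ∃ (l : List ℂ) (u : ℂ → ℂ),
        (∀ a ∈ l, ‖a‖ < ρ) ∧
        DifferentiableOn ℂ u (ball (0 : ℂ) r) ∧
        (∀ z ∈ ball (0 : ℂ) r, u z ≠ 0) ∧
        (∀ z ∈ ball (0 : ℂ) r, f z = (l.map (fun a => z - a)).prod * u z) := by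
  intro n
  induction n using Nat.strong_induction_on with
  | _ n IH =>
  intro f Z hcard hf hiff hbound
  rcases Z.eq_empty_or_nonempty with hZe | ⟨a, haZ⟩
  · refine ⟨[], f, by simp, hf, fun z hz => ?_, fun z hz => by simp⟩
    intro h0
    rw [hiff z hz, hZe] at h0
    simp at h0
  · have haρ : ‖a‖ < ρ := hbound a haZ
    have hab : a ∈ ball (0 : ℂ) r := by
      rw [mem_ball_zero_iff]
      exact lt_trans (by exact_mod_cast haρ) hρr
    have hfa0 : f a = 0 := (hiff a hab).mpr haZ
    have hfa : AnalyticAt ℂ f a := hf.analyticAt (isOpen_ball.mem_nhds hab)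
    -- the order of f at a is finite
    have hord : analyticOrderAt f a ≠ ⊤ := by
      intro htop
      have hev : f =ᶠ[nhds a] 0 := analyticOrderAt_eq_top.mp htop
      have hEq : Set.EqOn f 0 (ball (0 : ℂ) r) :=
        (hf.analyticOnNhd isOpen_ball).eqOn_zero_of_preconnected_of_eventuallyEq_zero
          (convex_ball (0:ℂ) r).isPreconnected hab hev
      have hsub : ball (0 : ℂ) r ⊆ (Z : Set ℂ) := by
        intro z hz
        exact_mod_cast (hiff z hz).mp (hEq hz)
      have hinf : (ball (0 : ℂ) r).Infinite :=
        infinite_of_mem_nhds (0 : ℂ) (isOpen_ball.mem_nhds (mem_ball_self (hρ.trans hρr)))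
      exact hinf (Z.finite_toSet.subset hsub)
    obtain ⟨m, hm⟩ := Option.ne_none_iff_exists.mp hord
    obtain ⟨g, hg, hga, hfg⟩ := hfa.analyticOrderAt_eq_natCast.mp hm.symm
    have hm1 : 1 ≤ m := by
      by_contra hcon
      have hm0 : m = 0 := by omega
      have hfa' := hfg.self_of_nhds
      rw [hm0, pow_zero, one_smul, hfa0] at hfa'
      exact hga hfa'.symm
    set G : ℂ → ℂ := Function.update (fun z => f z / (z - a) ^ m) a (g a) with hG'
    have hGa : G a = g a := by rw [hG']; exact Function.update_self _ _ _
    have hGeq : ∀ z ≠ a, G z = f z / (z - a) ^ m := fun z hz =>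
      Function.update_of_ne hz _ _
    have hGg : G =ᶠ[nhds a] g := by
      filter_upwards [hfg] with z hz
      rcases eq_or_ne z a with rfl | hza
      · simpa using hGa ▸ rfl
      · rw [hGeq z hza, hz, smul_eq_mul]
        exact mul_div_cancel_left₀ (g z) (pow_ne_zero m (sub_ne_zero.mpr hza))
    have hGd : DifferentiableOn ℂ G (ball (0 : ℂ) r) := by
      intro z hz
      rcases eq_or_ne z a with rfl | hza
      · exact (hGg.differentiableAt_iff.mpr hg.differentiableAt).differentiableWithinAt
      · have hopen : IsOpen (ball (0 : ℂ) r ∩ {w | w ≠ a}) :=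
          isOpen_ball.inter (isOpen_compl_singleton)
        have hmem : z ∈ ball (0 : ℂ) r ∩ {w | w ≠ a} := ⟨hz, hza⟩
        have hd : DifferentiableAt ℂ (fun w => f w / (w - a) ^ m) z := by
          refine DifferentiableAt.div (hf.differentiableAt (isOpen_ball.mem_nhds hz)) ?_ ?_
          · exact ((differentiableAt_id.sub_const a).pow m)
          · exact pow_ne_zero m (sub_ne_zero.mpr hza)
        refine (hd.congr_of_eventuallyEq ?_).differentiableWithinAt
        filter_upwards [hopen.mem_nhds hmem] with w hw
        exact hGeq w hw.2
    have hkey : ∀ z ∈ ball (0 : ℂ) r, f z = (z - a) ^ m * G z := by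
      intro z hz
      rcases eq_or_ne z a with rfl | hza
      · rw [hfa0, sub_self, zero_pow (by omega : m ≠ 0), zero_mul]
      · rw [hGeq z hza, mul_div_cancel₀ _ (pow_ne_zero m (sub_ne_zero.mpr hza))]
    have hGiff : ∀ z ∈ ball (0 : ℂ) r, (G z = 0 ↔ z ∈ Z.erase a) := by
      intro z hz
      rcases eq_or_ne z a with rfl | hza
      · rw [hGa]
        simp [hga, Finset.mem_erase]
      · rw [hGeq z hza, div_eq_zero_iff]
        have hpne : (z - a) ^ m ≠ 0 := pow_ne_zero m (sub_ne_zero.mpr hza)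
        simp only [hpne, or_false]
        rw [hiff z hz, Finset.mem_erase]
        simp [hza]
    have hcard' : (Z.erase a).card < n := by
      rw [Finset.card_erase_of_mem haZ, ← hcard]
      have := Finset.card_pos.mpr ⟨a, haZ⟩
      omega
    obtain ⟨l', u, hl'ρ, hud, hune, hueq⟩ :=
      IH _ hcard' G (Z.erase a) rfl hGd hGiff
        (fun z hzZ => hbound z (Finset.mem_of_mem_erase hzZ))
    refine ⟨List.replicate m a ++ l', u, ?_, hud, hune, ?_⟩
    · intro b hb
      rcases List.mem_append.mp hb with hb | hb
      · rw [List.eq_of_mem_replicate hb]; exact haρ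
      · exact hl'ρ b hb
    · intro z hz
      rw [hkey z hz, hueq z hz, List.map_append, List.prod_append, List.map_replicate,
        List.prod_replicate]
      ring


lemma list_le_foldr_max (l : List ℝ) : ∀ x ∈ l, x ≤ l.foldr max 0 := by
  induction l with
  | nil => simp
  | cons a l IH =>
    intro x hx
    rcases List.mem_cons.mp hx with rfl | hx
    · exact le_max_left _ _
    · exact le_trans (IH x hx) (le_max_right _ _)

lemma list_foldr_max_lt (l : List ℝ) {c : ℝ} (hc : 0 < c) (h : ∀ x ∈ l, x < c) :
    l.foldr max 0 < c := by
  induction l with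
  | nil => simpa
  | cons a l IH =>
    simp only [List.foldr_cons, max_lt_iff]
    exact ⟨h a (by simp), IH fun x hx => h x (List.mem_cons_of_mem _ hx)⟩

lemma diff_list_prod (l : List ℂ) (φ : ℂ → ℂ → ℂ) (h : ∀ a ∈ l, Differentiable ℂ (φ a)) :
    Differentiable ℂ (fun z => (l.map (fun a => φ a z)).prod) := by
  induction l with
  | nil => simpa using differentiable_const (1 : ℂ)
  | cons a l IH =>
    simp only [List.map_cons, List.prod_cons]
    exact (h a (by simp)).mul (IH fun b hb => h b (List.mem_cons_of_mem _ hb))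

lemma circle_prod_eq (l : List ℂ) (ρ : ℝ) (z : ℂ) (hz : ‖z‖ = ρ) :
    (l.map (fun a => ((ρ : ℂ)) ^ 2 - (starRingEnd ℂ) a * z)).prod =
      (starRingEnd ℂ) ((l.map (fun a => z - a)).prod) * z ^ l.length := by
  induction l with
  | nil => simp
  | cons a l IH =>
    simp only [List.map_cons, List.prod_cons, map_mul, List.length_cons]
    rw [IH]
    have h1 : (starRingEnd ℂ) z * z = ((ρ : ℂ)) ^ 2 := by
      rw [mul_comm, Complex.mul_conj, Complex.normSq_eq_norm_sq, hz]
      push_cast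
      ring
    have key : ((ρ : ℂ)) ^ 2 - (starRingEnd ℂ) a * z = (starRingEnd ℂ) (z - a) * z := by
      rw [map_sub, ← h1]
      ring
    rw [key, pow_succ]
    ring


/-- If `f` is holomorphic on the unit disc, `0 < ρ < 1`, and `f` has no zeros on the
circle `|z| = ρ`, then `f` factors as `f = g·h` with `g, h` holomorphic on a
neighborhood `{|z| < ρ + ε}` of the closed disc of radius `ρ`, and
`|g|² = |h|² = |f|` on the circle `|z| = ρ`. -/
theorem factorization_gh (f : ℂ → ℂ)
    (hf : DifferentiableOn ℂ f (ball (0 : ℂ) 1))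
    (ρ : ℝ) (hρ0 : 0 < ρ) (hρ1 : ρ < 1)
    (hnz : ∀ z : ℂ, ‖z‖ = ρ → f z ≠ 0) :
    ∃ ε : ℝ, 0 < ε ∧ ρ + ε ≤ 1 ∧
      ∃ g h : ℂ → ℂ,
        DifferentiableOn ℂ g (ball (0 : ℂ) (ρ + ε)) ∧
        DifferentiableOn ℂ h (ball (0 : ℂ) (ρ + ε)) ∧
        (∀ z ∈ ball (0 : ℂ) (ρ + ε), f z = g z * h z) ∧
        (∀ z : ℂ, ‖z‖ = ρ →
          ‖g z‖ ^ 2 = ‖f z‖ ∧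
          ‖h z‖ ^ 2 = ‖f z‖) := by
  have hρC : ‖(ρ : ℂ)‖ = ρ := by
    rw [Complex.norm_real, Real.norm_eq_abs, abs_of_pos hρ0]
  have hρball : (ρ : ℂ) ∈ ball (0 : ℂ) 1 := by
    rw [mem_ball_zero_iff, hρC]; exact hρ1
  have hfρ : f (ρ : ℂ) ≠ 0 := hnz _ hρC
  set r₁ : ℝ := (1 + ρ) / 2 with hr₁
  have hρr₁ : ρ < r₁ := by rw [hr₁]; linarith
  have hr₁1 : r₁ < 1 := by rw [hr₁]; linarith
  have hsub1 : closedBall (0 : ℂ) r₁ ⊆ ball (0 : ℂ) 1 := closedBall_subset_ball hr₁1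
  -- finiteness of zeros in the closed ball of radius r₁
  have hSfin : {z : ℂ | z ∈ closedBall (0 : ℂ) r₁ ∧ f z = 0}.Finite := by
    by_contra hinf
    obtain ⟨x, hxK, hacc⟩ := Set.Infinite.exists_accPt_of_subset_isCompact hinf
      (isCompact_closedBall (0 : ℂ) r₁) (fun z hz => hz.1)
    have hfreq : ∃ᶠ w in nhdsWithin x {x}ᶜ, f w = 0 := by
      have h1 := accPt_iff_frequently.mp hacc
      rw [frequently_nhdsWithin_iff]
      refine h1.mono ?_
      rintro w ⟨hwx, hwS⟩
      exact ⟨hwS.2, hwx⟩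
    have heq := (hf.analyticOnNhd isOpen_ball).eqOn_zero_of_preconnected_of_frequently_eq_zero
      (convex_ball (0 : ℂ) 1).isPreconnected (hsub1 hxK) hfreq
    exact hfρ (heq hρball)
  -- choose a good radius r between ρ and r₁ avoiding the finitely many zeros outside ball ρ
  have hTfin : {z : ℂ | (z ∈ closedBall (0 : ℂ) r₁ ∧ f z = 0) ∧ ρ < ‖z‖}.Finite :=
    hSfin.subset fun z hz => hz.1
  set A : Finset ℝ := insert r₁ (hTfin.image (fun z : ℂ => ‖z‖)).toFinset with hA'
  have hAne : A.Nonempty := ⟨r₁, Finset.mem_insert_self _ _⟩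
  set μ : ℝ := A.min' hAne with hμ'
  have hμρ : ρ < μ := by
    rw [hμ', Finset.lt_min'_iff]
    intro y hy
    rcases Finset.mem_insert.mp hy with rfl | hy
    · exact hρr₁
    · obtain ⟨z, hzT, rfl⟩ := ((hTfin.image (fun z : ℂ => ‖z‖)).mem_toFinset).mp hy
      exact hzT.2
  have hμr₁ : μ ≤ r₁ := Finset.min'_le _ _ (Finset.mem_insert_self _ _)
  set r : ℝ := (ρ + μ) / 2 with hr'
  have hρr : ρ < r := by rw [hr']; linarith
  have hrμ : r < μ := by rw [hr']; linarith
  have hr1 : r < 1 := by linarith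
  have hzero : ∀ z ∈ ball (0 : ℂ) r, f z = 0 → ‖z‖ < ρ := by
    intro z hz h0
    by_contra hge
    push_neg at hge
    have habsr : ‖z‖ < r := by
      rw [mem_ball_zero_iff] at hz; exact hz
    have habs : ρ < ‖z‖ := lt_of_le_of_ne hge fun h => hnz z h.symm h0
    have hzS : (z ∈ closedBall (0 : ℂ) r₁ ∧ f z = 0) ∧ ρ < ‖z‖ := by
      refine ⟨⟨?_, h0⟩, habs⟩
      rw [mem_closedBall_zero_iff]
      linarith
    have hmem : ‖z‖ ∈ A :=
      Finset.mem_insert_of_mem ((hTfin.image (fun z : ℂ => ‖z‖)).mem_toFinset.mpr ⟨z, hzS, rfl⟩)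
    have := Finset.min'_le A _ hmem
    linarith
  -- the finite set of zeros inside ball r
  have hballsub : ball (0 : ℂ) r ⊆ closedBall (0 : ℂ) r₁ :=
    (ball_subset_closedBall).trans (closedBall_subset_closedBall (by linarith))
  have hZfin : {z : ℂ | z ∈ ball (0 : ℂ) r ∧ f z = 0}.Finite :=
    hSfin.subset fun z hz => ⟨hballsub hz.1, hz.2⟩
  have hiff : ∀ z ∈ ball (0 : ℂ) r, (f z = 0 ↔ z ∈ hZfin.toFinset) := by
    intro z hz
    rw [Set.Finite.mem_toFinset]
    exact ⟨fun h => ⟨hz, h⟩, fun h => h.2⟩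
  have hbd : ∀ z ∈ hZfin.toFinset, ‖z‖ < ρ := by
    intro z hz
    rw [Set.Finite.mem_toFinset] at hz
    exact hzero z hz.1 hz.2
  obtain ⟨l, u, hlρ, hud, hune, hueq⟩ :=
    factor_zeros r ρ hρ0 hρr hZfin.toFinset.card f hZfin.toFinset rfl
      (hf.mono (ball_subset_ball hr1.le)) hiff hbd
  -- choose ε
  set D : ℝ := max ((l.map (fun a : ℂ => ‖a‖)).foldr max 0) (ρ / 2) with hD'
  have hD0 : 0 < D := lt_of_lt_of_le (by linarith) (le_max_right _ _)
  have hDρ : D < ρ := by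
    refine max_lt ?_ (by linarith)
    refine list_foldr_max_lt _ hρ0 fun x hx => ?_
    obtain ⟨a, ha, rfl⟩ := List.mem_map.mp hx
    exact hlρ a ha
  have haD : ∀ a ∈ l, ‖a‖ ≤ D := fun a ha =>
    le_trans (list_le_foldr_max _ _ (List.mem_map_of_mem ha)) (le_max_left _ _)
  have hρD : ρ < ρ ^ 2 / D := by
    rw [lt_div_iff₀ hD0]; nlinarith
  set R' : ℝ := min (min r 1) (ρ ^ 2 / D) with hR''
  have hρR' : ρ < R' := lt_min (lt_min hρr hρ1) hρD
  set ε : ℝ := (R' - ρ) / 2 with hε'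
  have hε0 : 0 < ε := by rw [hε']; linarith
  have hρεR' : ρ + ε < R' := by rw [hε']; linarith
  have hρε1 : ρ + ε ≤ 1 := le_of_lt (lt_of_lt_of_le hρεR' ((min_le_left _ _).trans (min_le_right _ _)))
  have hρεr : ρ + ε < r := lt_of_lt_of_le hρεR' ((min_le_left _ _).trans (min_le_left _ _))
  have hρεD : ρ + ε < ρ ^ 2 / D := lt_of_lt_of_le hρεR' (min_le_right _ _)
  have hρε0 : 0 < ρ + ε := by linarith
  -- set up the functions
  set nL : ℕ := l.length with hnL
  set P : ℂ → ℂ := fun z => (l.map (fun a => z - a)).prod with hP'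
  set Q : ℂ → ℂ := fun z => (l.map (fun a => ((ρ : ℂ)) ^ 2 - (starRingEnd ℂ) a * z)).prod with hQ'
  have hPd : Differentiable ℂ P :=
    diff_list_prod l (fun a z => z - a) fun a _ => differentiable_id.sub_const a
  have hQd : Differentiable ℂ Q :=
    diff_list_prod l (fun a z => ((ρ : ℂ)) ^ 2 - (starRingEnd ℂ) a * z)
      fun a _ => (differentiable_const _).sub (differentiable_id.const_mul _)
  have hballr : ball (0 : ℂ) (ρ + ε) ⊆ ball (0 : ℂ) r := ball_subset_ball hρεr.le
  have hQne : ∀ z ∈ ball (0 : ℂ) (ρ + ε), Q z ≠ 0 := by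
    intro z hz
    refine List.prod_ne_zero ?_
    intro hmem
    obtain ⟨a, ha, heq⟩ := List.mem_map.mp hmem
    have hzabs : ‖z‖ < ρ + ε := by
      rw [mem_ball_zero_iff] at hz; exact hz
    have h1 : ‖(starRingEnd ℂ) a * z‖ < ρ ^ 2 := by
      rw [norm_mul, Complex.norm_conj]
      calc ‖a‖ * ‖z‖ ≤ D * (ρ + ε) := by
            exact mul_le_mul (haD a ha) hzabs.le (norm_nonneg z)
              (le_trans (norm_nonneg a) (haD a ha))
        _ < D * (ρ ^ 2 / D) := by exact mul_lt_mul_of_pos_left hρεD hD0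
        _ = ρ ^ 2 := by field_simp
    have h2 : (starRingEnd ℂ) a * z = ((ρ : ℂ)) ^ 2 :=
      (sub_eq_zero.mp heq).symm
    rw [h2, norm_pow, hρC] at h1
    exact lt_irrefl _ h1
  set F : ℂ → ℂ := fun z => u z * Q z / ((ρ : ℂ)) ^ nL with hF'
  have hρCne : ((ρ : ℂ)) ≠ 0 := Complex.ofReal_ne_zero.mpr hρ0.ne'
  have hρnne : ((ρ : ℂ)) ^ nL ≠ 0 := pow_ne_zero _ hρCne
  have hFd : DifferentiableOn ℂ F (ball (0 : ℂ) (ρ + ε)) :=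
    ((hud.mono hballr).mul hQd.differentiableOn).div_const _
  have hFne : ∀ z ∈ ball (0 : ℂ) (ρ + ε), F z ≠ 0 := fun z hz =>
    div_ne_zero (mul_ne_zero (hune z (hballr hz)) (hQne z hz)) hρnne
  obtain ⟨h, hhd, hh2⟩ := exists_sqrt_on_ball hρε0 F hFd hFne
  set g : ℂ → ℂ := fun z => ((ρ : ℂ)) ^ nL * P z / Q z * h z with hg'
  have hgd : DifferentiableOn ℂ g (ball (0 : ℂ) (ρ + ε)) := by
    refine DifferentiableOn.mul ?_ hhd
    exact DifferentiableOn.div ((differentiableOn_const _).mul hPd.differentiableOn)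
      hQd.differentiableOn hQne
  refine ⟨ε, hε0, hρε1, g, h, hgd, hhd, ?_, ?_⟩
  · intro z hz
    have hfz : f z = P z * u z := hueq z (hballr hz)
    have hgh : g z * h z = ((ρ : ℂ)) ^ nL * P z / Q z * (h z ^ 2) := by
      rw [hg']; ring
    rw [hfz, hgh, hh2 z hz, hF']
    field_simp [hQne z hz]
  · intro z hz
    have hzball : z ∈ ball (0 : ℂ) (ρ + ε) := by
      rw [mem_ball_zero_iff, hz]; linarith
    have hQP : Q z = (starRingEnd ℂ) (P z) * z ^ nL := circle_prod_eq l ρ z hz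
    have habsQ : ‖Q z‖ = ‖P z‖ * ρ ^ nL := by
      rw [hQP, norm_mul, Complex.norm_conj, norm_pow, hz]
    have hfz : f z = P z * u z := hueq z (hballr hzball)
    have hPne : ‖P z‖ ≠ 0 := by
      rw [norm_ne_zero_iff]
      intro h0
      exact hnz z hz (by rw [hfz, h0, zero_mul])
    have hhf : ‖h z‖ ^ 2 = ‖f z‖ := by
      rw [← norm_pow, hh2 z hzball, hF', hfz]
      simp only [norm_div, norm_mul, norm_pow, hρC, habsQ]
      field_simp [hρ0.ne']
    have habsg : ‖g z‖ = ‖h z‖ := by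
      rw [hg']
      simp only [norm_mul, norm_div, norm_pow, hρC, habsQ]
      rw [mul_comm (‖P z‖) (ρ ^ nL),
        div_self (mul_ne_zero (pow_ne_zero _ hρ0.ne') hPne), one_mul]
    exact ⟨by rw [habsg, hhf], hhf⟩
end
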